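/- arXiv:2204.05161 — 6 statements merged into one kernel-verified Lean document; each statement's English description precedes it below -/
import Mathlib

section
/- For all positive integers m and n with n dividing m, the gcd of F_m / F_n and F_n divides m / n. -/
open Nat

lemma fib_key (n : ℕ) (hn : 0 < n) : ∀ k : ℕ,
    ((fib n : ℤ)^2 ∣ (fib ((k+1)*n) : ℤ) - (k+1) * fib n * fib (n+1)^k) ∧
    ((fib n : ℤ)^2 ∣ (fib ((k+1)*n + 1) : ℤ) - fib (n+1)^(k+1)) := by
  intro k
  induction k with
  | zero => simp
  | succ k ih =>
    obtain ⟨⟨c, hc⟩, ⟨d, hd⟩⟩ := ih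
    set a := (k+1)*n with ha
    have hfib1 : (fib (a + n) : ℤ) = fib a * fib (n-1) + fib (a+1) * fib n := by
      have : a + n = a + (n-1) + 1 := by omega
      rw [this, Nat.fib_add, show n - 1 + 1 = n from by omega]; push_cast; ring
    have hfib2 : (fib (a + n + 1) : ℤ) = fib a * fib n + fib (a+1) * fib (n+1) := by
      rw [Nat.fib_add]; push_cast; ring
    have hnm1 : (fib (n-1) : ℤ) = fib (n+1) - fib n := by
      have : n + 1 = (n - 1) + 2 := by omega
      rw [this, Nat.fib_add_two, show n - 1 + 1 = n from by omega]; push_cast; ring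
    have hab : (k+2)*n = a + n := by ring
    have hc' : (fib a : ℤ) = (k+1) * fib n * fib (n+1)^k + fib n^2 * c := by linarith [hc]
    have hd' : (fib (a+1) : ℤ) = fib (n+1)^(k+1) + fib n^2 * d := by linarith [hd]
    constructor
    · refine ⟨c * (fib (n+1) - fib n) - (k+1) * fib (n+1)^k + d * fib n, ?_⟩
      rw [hab, hfib1, hnm1, hc', hd']
      push_cast; ring
    · refine ⟨(k+1) * fib (n+1)^k + c * fib n + d * fib (n+1), ?_⟩
      rw [hab, hfib2, hc', hd']
      push_cast; ring

theorem gcd_fib_ratio_dvd (m n : ℕ) (hm : 0 < m) (hn : 0 < n) (h : n ∣ m) :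
    Nat.gcd (Nat.fib m / Nat.fib n) (Nat.fib n) ∣ m / n := by
  obtain ⟨k, rfl⟩ := h
  have hk : 0 < k := Nat.pos_of_ne_zero (by rintro rfl; simp at hm)
  obtain ⟨j, rfl⟩ : ∃ j, k = j + 1 := ⟨k - 1, by omega⟩
  have hdvd : fib n ∣ fib (n * (j+1)) := Nat.fib_dvd n (n*(j+1)) ⟨j+1, rfl⟩
  set q := fib (n * (j+1)) / fib n with hq
  have hfn : 0 < fib n := fib_pos.mpr hn
  have hmul : fib (n * (j+1)) = fib n * q := (Nat.mul_div_cancel' hdvd).symm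
  have hkey := (fib_key n hn j).1
  rw [show (j+1)*n = n*(j+1) by ring, hmul] at hkey
  have h2 : (fib n : ℤ) ∣ (q : ℤ) - (j+1) * fib (n+1)^j := by
    have h3 : (fib n : ℤ)^2 ∣ (fib n : ℤ) * ((q : ℤ) - (j+1) * fib (n+1)^j) := by
      convert hkey using 1; push_cast; ring
    rcases h3 with ⟨c, hc⟩
    refine ⟨c, ?_⟩
    have : (fib n : ℤ) ≠ 0 := by positivity
    exact mul_left_cancel₀ this (by linarith [hc])
  set g := Nat.gcd q (fib n) with hg
  have hgq : (g : ℤ) ∣ q := Int.natCast_dvd_natCast.mpr (Nat.gcd_dvd_left _ _)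
  have hgn : (g : ℤ) ∣ fib n := Int.natCast_dvd_natCast.mpr (Nat.gcd_dvd_right _ _)
  have hgj : (g : ℤ) ∣ (j+1) * fib (n+1)^j := by
    have := dvd_sub hgq (hgn.trans h2)
    simpa using this
  have hcop : Nat.Coprime g (fib (n+1)) :=
    Nat.Coprime.coprime_dvd_left (Nat.gcd_dvd_right _ _) (Nat.fib_coprime_fib_succ n)
  have hgj' : g ∣ (j+1) * fib (n+1)^j := by
    have : ((j+1) * fib (n+1)^j : ℤ) = ((j+1) * fib (n+1)^j : ℕ) := by push_cast; ring
    rw [this] at hgj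
    exact_mod_cast hgj
  have : g ∣ j + 1 := (Nat.Coprime.dvd_of_dvd_mul_right (hcop.pow_right j) hgj')
  rwa [Nat.mul_div_cancel_left _ hn]
end

section
/- For all positive integers m and n, m divides gcd(n, F_n) if and only if ℓ(m) divides n, where ℓ(m) := lcm(m, z(m)). -/
/-- The rank of appearance (entry point) of `m` in the Fibonacci sequence. -/
noncomputable def fibZ (m : ℕ) : ℕ := sInf {n | 0 < n ∧ m ∣ Nat.fib n}

/-- `ℓ(m) = lcm(m, z(m))`. -/
noncomputable def ellF (m : ℕ) : ℕ := Nat.lcm m (fibZ m)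

lemma fib_exists_dvd (m : ℕ) (hm : 0 < m) : ∃ n, 0 < n ∧ m ∣ Nat.fib n := by
  haveI : NeZero m := ⟨hm.ne'⟩
  set f : ℕ → ZMod m := fun k => (Nat.fib k : ZMod m) with hf
  obtain ⟨x, y, hxy, hg⟩ := Finite.exists_ne_map_eq_of_infinite
    (fun k : ℕ => (f k, f (k + 1)))
  wlog hlt : x < y generalizing x y
  · exact this y x hxy.symm hg.symm (by omega)
  have h1 : f x = f y := congrArg Prod.fst hg
  have h2 : f (x + 1) = f (y + 1) := congrArg Prod.snd hg
  have key : ∀ k, k ≤ x → f (x - k) = f (y - k) ∧ f (x - k + 1) = f (y - k + 1) := by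
    intro k
    induction k with
    | zero => intro _; simpa using ⟨h1, h2⟩
    | succ k ih =>
      intro hk
      obtain ⟨ha, hb⟩ := ih (by omega)
      have hx1 : 1 ≤ x - k := by omega
      have hy1 : 1 ≤ y - k := by omega
      have hrec : ∀ a : ℕ, 1 ≤ a → f (a - 1) = f (a + 1) - f a := by
        intro a ha'
        have : Nat.fib (a - 1) + Nat.fib a = Nat.fib (a + 1) := by
          have := Nat.fib_add_two (n := a - 1)
          rw [show a - 1 + 2 = a + 1 by omega, show a - 1 + 1 = a by omega] at this
          omega
        have := congrArg (fun t : ℕ => (t : ZMod m)) this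
        push_cast at this
        simp only [hf]
        linear_combination this
      have e1 : x - (k + 1) = x - k - 1 := by omega
      have e2 : y - (k + 1) = y - k - 1 := by omega
      have e3 : x - (k + 1) + 1 = x - k := by omega
      have e4 : y - (k + 1) + 1 = y - k := by omega
      refine ⟨?_, by rw [e3, e4]; exact ha⟩
      rw [e1, e2, hrec _ hx1, hrec _ hy1]
      have hb' : f (x - k + 1) = f (y - k + 1) := hb
      rw [ha, hb']
  obtain ⟨hz, _⟩ := key x le_rfl
  simp only [Nat.sub_self] at hz
  refine ⟨y - x, by omega, ?_⟩
  have : f (y - x) = 0 := by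
    rw [← hz]; simp [hf]
  rwa [hf, ZMod.natCast_eq_zero_iff] at this

lemma fibZ_mem (m : ℕ) (hm : 0 < m) : 0 < fibZ m ∧ m ∣ Nat.fib (fibZ m) := by
  have := Nat.sInf_mem (s := {n | 0 < n ∧ m ∣ Nat.fib n}) (fib_exists_dvd m hm)
  exact this

lemma dvd_fib_iff (m n : ℕ) (hm : 0 < m) (hn : 0 < n) :
    m ∣ Nat.fib n ↔ fibZ m ∣ n := by
  obtain ⟨hzpos, hzdvd⟩ := fibZ_mem m hm
  constructor
  · intro h
    have hg : m ∣ Nat.fib (Nat.gcd n (fibZ m)) := by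
      rw [Nat.fib_gcd]
      exact Nat.dvd_gcd h hzdvd
    have hgpos : 0 < Nat.gcd n (fibZ m) := Nat.gcd_pos_of_pos_left _ hn
    have h1 : fibZ m ≤ Nat.gcd n (fibZ m) := Nat.sInf_le ⟨hgpos, hg⟩
    have h2 : Nat.gcd n (fibZ m) ≤ fibZ m := Nat.le_of_dvd hzpos (Nat.gcd_dvd_right _ _)
    have : Nat.gcd n (fibZ m) = fibZ m := le_antisymm h2 h1
    rw [← this]
    exact Nat.gcd_dvd_left _ _
  · intro h
    exact hzdvd.trans (Nat.fib_dvd _ _ h)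

theorem dvd_gcd_iff_ell_dvd (m n : ℕ) (hm : 0 < m) (hn : 0 < n) :
    m ∣ Nat.gcd n (Nat.fib n) ↔ ellF m ∣ n := by
  constructor
  · intro h
    have h1 : m ∣ n := h.trans (Nat.gcd_dvd_left _ _)
    have h2 : m ∣ Nat.fib n := h.trans (Nat.gcd_dvd_right _ _)
    exact Nat.lcm_dvd h1 ((dvd_fib_iff m n hm hn).mp h2)
  · intro h
    have h1 : m ∣ n := (Nat.dvd_lcm_left _ _).trans h
    have h2 : fibZ m ∣ n := (Nat.dvd_lcm_right _ _).trans h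
    exact Nat.dvd_gcd h1 ((dvd_fib_iff m n hm hn).mpr h2)
end

section
/- For every positive integer n, the rank of appearance satisfies z(n) ≤ 2n. -/
/-!
With `α = 1 + √5` and `β = 1 - √5` one has `αⁿ - βⁿ = 2ⁿ √5 Fₙ`. For a prime `p ≠ 2, 5`, in a ring
of characteristic `p` containing `√5`, Euler's criterion makes the Frobenius send `√5` to `±√5`,
so it fixes or swaps `α` and `β`, whence `p ∣ F_{p-1}` or `p ∣ F_{p+1}`. Since
`F_{km} ≡ k F_m F_{m+1}^{k-1} (mod F_m²)`, each further factor `p` costs a factor `p` in the index.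

Write `n = 2^a 5^b r` with `r` prime to `10`. Then `5^b ∣ F_{5^b}`, `2^{k+1} ∣ F_{3·2^k}`, and if
`r > 1` then `r ∣ F_{2d}` with `3d ≤ 2r`, because `p ± 1` is even and `(p + 1)/2 ≤ 2p/3`. Coprime
factors divide `F` at any common multiple of their indices, so the odd part `m = 5^b r` divides
some `F_w` with `3w ≤ 4m`, and for `a ≥ 1`, `n` divides `F_{3·2^{a-1}w}`.
-/

open Polynomial

theorem one_add_pow_sub_one_sub_pow {R : Type*} [CommRing R] {s : R} (hs : s ^ 2 = 5) (n : ℕ) :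
    (1 + s) ^ n - (1 - s) ^ n = 2 ^ n * s * Nat.fib n := by
  induction n using Nat.twoStepInduction with
  | zero => simp
  | one => simp; ring
  | more n ih₀ ih₁ =>
    rw [Nat.fib_add_two, Nat.cast_add]
    linear_combination ((1 + s) ^ n - (1 - s) ^ n) * hs + 4 * ih₀ + 2 * ih₁

theorem dvd_fib_of_one_add_pow_eq_one_sub_pow {p : ℕ} (hp : p.Prime) (hp2 : p ≠ 2) (hp5 : p ≠ 5)
    {R : Type*} [CommRing R] [CharP R p] {s : R} (hs : s ^ 2 = 5) {n : ℕ}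
    (h : (1 + s) ^ n = (1 - s) ^ n) : p ∣ Nat.fib n := by
  have hcast : ((2 ^ n * 5 * Nat.fib n : ℕ) : R) = 0 := by
    push_cast
    linear_combination (-s) * one_add_pow_sub_one_sub_pow hs n - (2 ^ n * Nat.fib n : R) * hs
      + s * h
  rcases hp.dvd_mul.1 ((CharP.cast_eq_zero_iff R p _).1 hcast) with h' | h'
  · rcases hp.dvd_mul.1 h' with h2 | h5
    · exact absurd ((Nat.prime_dvd_prime_iff_eq hp Nat.prime_two).1 (hp.dvd_of_dvd_pow h2)) hp2
    · exact absurd ((Nat.prime_dvd_prime_iff_eq hp Nat.prime_five).1 h5) hp5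
  · exact h'

theorem ZMod.natCast_prime_ne_zero {p q : ℕ} (hp : p.Prime) (hq : q.Prime) (hpq : q ≠ p) :
    (q : ZMod p) ≠ 0 := by
  rw [Ne, ZMod.natCast_eq_zero_iff]
  exact fun h => hpq ((Nat.prime_dvd_prime_iff_eq hp hq).1 h).symm

theorem dvd_fib_sub_one_or_dvd_fib_add_one_of_sq_eq_five {p : ℕ} [hp : Fact p.Prime]
    (hp2 : p ≠ 2) (hp5 : p ≠ 5) {R : Type*} [CommRing R] [CharP R p] {s : R} (hs : s ^ 2 = 5) :
    p ∣ Nat.fib (p - 1) ∨ p ∣ Nat.fib (p + 1) := by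
  have hodd : p = 2 * (p / 2) + 1 :=
    (Nat.two_mul_div_two_add_one_of_odd (hp.out.odd_of_ne_two hp2)).symm
  have h5 : (5 : ZMod p) ≠ 0 := by
    exact_mod_cast ZMod.natCast_prime_ne_zero hp.out Nat.prime_five hp5.symm
  have h4 : IsUnit (4 : R) := by
    have h2 := (IsUnit.mk0 _ (ZMod.natCast_prime_ne_zero hp.out Nat.prime_two hp2.symm)).map
      (ZMod.castHom (dvd_refl p) R)
    rw [map_natCast, Nat.cast_ofNat] at h2
    simpa [show (4 : R) = 2 * 2 by norm_num] using h2.mul h2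
  have hprod : (1 + s) * (1 - s) = -4 := by linear_combination -hs
  have hfrob (ε : R) (hε : (5 : R) ^ (p / 2) = ε) :
      (1 + s) ^ p = 1 + ε * s ∧ (1 - s) ^ p = 1 - ε * s := by
    have : s ^ p = ε * s := by rw [← hε, ← hs, ← pow_mul, ← pow_succ, ← hodd]
    rw [add_pow_char, sub_pow_char, one_pow, this]
    exact ⟨rfl, rfl⟩
  rcases ZMod.pow_div_two_eq_neg_one_or_one p h5 with he | he <;>
    replace he := congrArg (ZMod.castHom (dvd_refl p) R) he <;>
    simp only [map_pow, map_ofNat, map_one, map_neg] at he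
  · left
    obtain ⟨hα, hβ⟩ := hfrob 1 he
    have hunit : IsUnit ((1 + s) * (1 - s)) := hprod ▸ h4.neg
    have hsucc : p - 1 + 1 = p := Nat.sub_add_cancel hp.out.one_le
    have hα1 : (1 + s) ^ (p - 1) = 1 := by
      refine (isUnit_of_mul_isUnit_left hunit).mul_left_inj.1 ?_
      rw [← pow_succ, hsucc, hα, one_mul, one_mul]
    have hβ1 : (1 - s) ^ (p - 1) = 1 := by
      refine (isUnit_of_mul_isUnit_right hunit).mul_left_inj.1 ?_
      rw [← pow_succ, hsucc, hβ, one_mul, one_mul]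
    exact dvd_fib_of_one_add_pow_eq_one_sub_pow hp.out hp2 hp5 hs (hα1.trans hβ1.symm)
  · right
    obtain ⟨hα, hβ⟩ := hfrob (-1) he
    apply dvd_fib_of_one_add_pow_eq_one_sub_pow hp.out hp2 hp5 hs
    rw [pow_succ, pow_succ, hα, hβ]
    ring

theorem Nat.Prime.dvd_fib_sub_one_or_dvd_fib_add_one {p : ℕ} (hp : p.Prime) (hp2 : p ≠ 2)
    (hp5 : p ≠ 5) : p ∣ Nat.fib (p - 1) ∨ p ∣ Nat.fib (p + 1) := by
  have := Fact.mk hp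
  set f : (ZMod p)[X] := X ^ 2 - C 5 with hf
  have : Nontrivial (AdjoinRoot f) :=
    AdjoinRoot.nontrivial f (by rw [show f.degree = 2 by rw [hf]; compute_degree!]; decide)
  have := charP_of_injective_algebraMap (algebraMap (ZMod p) (AdjoinRoot f)).injective p
  refine dvd_fib_sub_one_or_dvd_fib_add_one_of_sq_eq_five hp2 hp5 (s := AdjoinRoot.root f) ?_
  simpa [hf, sub_eq_zero, map_ofNat] using AdjoinRoot.eval₂_root f

theorem fib_mul_eq_of_sq_eq_zero {R : Type*} [CommRing R] {m : ℕ}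
    (hm : (Nat.fib m : R) ^ 2 = 0) (k : ℕ) :
    (Nat.fib ((k + 1) * m) : R) = (k + 1) * Nat.fib m * Nat.fib (m + 1) ^ k ∧
      (Nat.fib ((k + 1) * m + 1) : R) = Nat.fib (m + 1) ^ (k + 1) := by
  induction k with
  | zero => simp
  | succ k ih =>
    obtain ⟨ih₀, ih₁⟩ := ih
    set a := (k + 1) * m
    have e₁ := congrArg (Nat.cast (R := R)) (Nat.fib_add a m)
    have e₂ := congrArg (Nat.cast (R := R)) (Nat.fib_add a (m + 1))
    have e₃ := congrArg (Nat.cast (R := R)) (@Nat.fib_add_two (a + m))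
    have e₄ := congrArg (Nat.cast (R := R)) (@Nat.fib_add_two m)
    rw [← add_assoc] at e₂
    push_cast at e₁ e₂ e₃ e₄ ⊢
    rw [show (k + 1 + 1) * m = a + m by ring]
    constructor
    · linear_combination e₂ - e₁ - e₃ + (Nat.fib (a + 1) : R) * e₄
        + (Nat.fib (m + 1) - Nat.fib m : R) * ih₀ + (Nat.fib m : R) * ih₁
        - ((k + 1) * Nat.fib (m + 1) ^ k : R) * hm
    · linear_combination e₁ + (Nat.fib m : R) * ih₀ + (Nat.fib (m + 1) : R) * ih₁
        + ((k + 1) * Nat.fib (m + 1) ^ k : R) * hm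

theorem pow_succ_dvd_fib_mul {p k m : ℕ} (hk : 1 ≤ k) (h : p ^ k ∣ Nat.fib m) :
    p ^ (k + 1) ∣ Nat.fib (p * m) := by
  obtain _ | q := p
  · simp
  have hsq : (Nat.fib m : ZMod ((q + 1) ^ (k + 1))) ^ 2 = 0 := by
    rw [← Nat.cast_pow, ZMod.natCast_eq_zero_iff]
    exact (pow_dvd_pow (q + 1) (by omega : k + 1 ≤ k * 2)).trans
      (by rw [pow_mul]; exact pow_dvd_pow_of_dvd h 2)
  have hp : ((q + 1) * Nat.fib m : ZMod ((q + 1) ^ (k + 1))) = 0 := by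
    rw [← Nat.cast_succ, ← Nat.cast_mul, ZMod.natCast_eq_zero_iff, pow_succ']
    exact mul_dvd_mul_left _ h
  rw [← ZMod.natCast_eq_zero_iff, (fib_mul_eq_of_sq_eq_zero hsq q).1, hp, zero_mul]

theorem pow_succ_dvd_fib_pow_mul {p m : ℕ} (h : p ∣ Nat.fib m) (e : ℕ) :
    p ^ (e + 1) ∣ Nat.fib (p ^ e * m) := by
  induction e with
  | zero => simpa using h
  | succ e ih => simpa [pow_succ', mul_assoc] using pow_succ_dvd_fib_mul (by omega) ih

theorem five_pow_dvd_fib_five_pow (b : ℕ) : 5 ^ b ∣ Nat.fib (5 ^ b) := by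
  cases b with
  | zero => simp
  | succ b => simpa [pow_succ] using pow_succ_dvd_fib_pow_mul (p := 5) (m := 5) (by decide) b

theorem Nat.Coprime.mul_dvd_fib {a b x y w : ℕ} (hab : a.Coprime b) (ha : a ∣ Nat.fib x)
    (hb : b ∣ Nat.fib y) (hx : x ∣ w) (hy : y ∣ w) : a * b ∣ Nat.fib w :=
  hab.mul_dvd_of_dvd_of_dvd (ha.trans (Nat.fib_dvd _ _ hx)) (hb.trans (Nat.fib_dvd _ _ hy))

theorem exists_dvd_fib_two_mul_of_prime_pow {p e : ℕ} (hp : p.Prime) (hp2 : p ≠ 2) (hp5 : p ≠ 5)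
    (he : 0 < e) : ∃ d, 0 < d ∧ 3 * d ≤ 2 * p ^ e ∧ p ^ e ∣ Nat.fib (2 * d) := by
  have hp3 : 3 ≤ p := lt_of_le_of_ne hp.two_le hp2.symm
  have hodd : p % 2 = 1 := Nat.odd_iff.1 (hp.odd_of_ne_two hp2)
  obtain ⟨c, hc0, hc, hpc⟩ : ∃ c, 0 < c ∧ 3 * c ≤ 2 * p ∧ p ∣ Nat.fib (2 * c) := by
    rcases hp.dvd_fib_sub_one_or_dvd_fib_add_one hp2 hp5 with h | h
    · exact ⟨(p - 1) / 2, by omega, by omega, by rwa [Nat.mul_div_cancel' (by omega)]⟩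
    · exact ⟨(p + 1) / 2, by omega, by omega, by rwa [Nat.mul_div_cancel' (by omega)]⟩
  obtain ⟨f, rfl⟩ : ∃ f, e = f + 1 := ⟨e - 1, by omega⟩
  refine ⟨p ^ f * c, by positivity, ?_, ?_⟩
  · calc 3 * (p ^ f * c) = p ^ f * (3 * c) := by ring
      _ ≤ p ^ f * (2 * p) := Nat.mul_le_mul_left _ hc
      _ = 2 * p ^ (f + 1) := by ring
  · rw [mul_left_comm]
    exact pow_succ_dvd_fib_pow_mul hpc f

theorem exists_dvd_fib_two_mul_of_coprime_ten {r : ℕ} (hr : 1 < r) (h10 : r.Coprime 10) :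
    ∃ d, 0 < d ∧ 3 * d ≤ 2 * r ∧ r ∣ Nat.fib (2 * d) := by
  induction r using Nat.recOnPosPrimePosCoprime with
  | zero => omega
  | one => omega
  | prime_pow p e hp he =>
    have hp10 : p.Coprime 10 := (Nat.coprime_pow_left_iff he _ _).1 h10
    refine exists_dvd_fib_two_mul_of_prime_pow hp ?_ ?_ he <;>
      rintro rfl <;> exact absurd hp10 (by decide)
  | coprime a b ha hb hab iha ihb =>
    obtain ⟨ha10, hb10⟩ := Nat.coprime_mul_iff_left.1 h10
    obtain ⟨da, hda0, hda, hadvd⟩ := iha ha ha10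
    obtain ⟨db, hdb0, hdb, hbdvd⟩ := ihb hb hb10
    refine ⟨da * db, by positivity, by nlinarith, hab.mul_dvd_fib hadvd hbdvd ?_ ?_⟩
    · exact ⟨db, by ring⟩
    · exact ⟨da, by ring⟩

theorem exists_dvd_fib_of_odd {m : ℕ} (hm : Odd m) :
    ∃ w, 0 < w ∧ 3 * w ≤ 4 * m ∧ m ∣ Nat.fib w := by
  obtain ⟨b, r, h5r, rfl⟩ := Nat.exists_eq_pow_mul_and_not_dvd hm.pos.ne' 5 (by norm_num)
  have hr : Odd r := hm.of_dvd_nat (dvd_mul_left r _)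
  have h5r' : Nat.Coprime 5 r := (Nat.Prime.coprime_iff_not_dvd Nat.prime_five).2 h5r
  rcases (show r = 1 ∨ 1 < r by have := hr.pos; omega) with rfl | hr1
  · exact ⟨5 ^ b, by positivity, by omega, by simpa using five_pow_dvd_fib_five_pow b⟩
  have h10 : r.Coprime 10 := Nat.Coprime.mul_right (Nat.coprime_two_right.2 hr) h5r'.symm
  obtain ⟨d, hd0, hd, hrd⟩ := exists_dvd_fib_two_mul_of_coprime_ten hr1 h10
  refine ⟨5 ^ b * (2 * d), by positivity, ?_, ?_⟩
  · calc 3 * (5 ^ b * (2 * d)) = 5 ^ b * (2 * (3 * d)) := by ring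
      _ ≤ 5 ^ b * (2 * (2 * r)) := by gcongr
      _ = 4 * (5 ^ b * r) := by ring
  · exact (h5r'.pow_left b).mul_dvd_fib (five_pow_dvd_fib_five_pow b) hrd
      (dvd_mul_right _ _) (dvd_mul_left _ _)

theorem exists_dvd_fib_le_two_mul {n : ℕ} (hn : 0 < n) :
    ∃ w, 0 < w ∧ w ≤ 2 * n ∧ n ∣ Nat.fib w := by
  obtain ⟨a, m, hm, rfl⟩ := Nat.exists_eq_two_pow_mul_odd hn.ne'
  obtain ⟨w, hw0, hw, hmw⟩ := exists_dvd_fib_of_odd hm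
  cases a with
  | zero => exact ⟨w, hw0, by omega, by simpa using hmw⟩
  | succ k =>
    have h2 : 2 ^ (k + 1) ∣ Nat.fib (2 ^ k * 3) :=
      pow_succ_dvd_fib_pow_mul (p := 2) (m := 3) (by decide) k
    refine ⟨2 ^ k * 3 * w, by positivity, ?_, ?_⟩
    · calc 2 ^ k * 3 * w = 2 ^ k * (3 * w) := by ring
        _ ≤ 2 ^ k * (4 * m) := by gcongr
        _ = 2 * (2 ^ (k + 1) * m) := by ring
    · exact ((Nat.coprime_two_left.2 hm).pow_left _).mul_dvd_fib h2 hmw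
        (dvd_mul_right _ _) (dvd_mul_left _ _)

theorem fibZ_le_two_mul (n : ℕ) (hn : 0 < n) : fibZ n ≤ 2 * n := by
  obtain ⟨w, hw0, hw, hnw⟩ := exists_dvd_fib_le_two_mul hn
  exact (Nat.sInf_le (⟨hw0, hnw⟩ : w ∈ {k | 0 < k ∧ n ∣ Nat.fib k})).trans hw
end

section
/- Let d, k be positive integers and let c_1, ..., c_k, D be vectors in ℕ^d (componentwise positive) such that the componentwise product c_1 ⋯ c_k is componentwise divisible by D and D is componentwise divisible by each c_i. Then the number of vectors x with 1 ≤ x_j ≤ D_j for all j, such that for each i there is some component j with c_{i,j} not dividing x_j, is at least (D_1 ⋯ D_d) · ∏_{i=1}^k (1 − 1/(c_{i,1} ⋯ c_{i,d})). -/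
/-!
Let `A` be the event `c ∣ x` and `B` the event `∃ i, cᵢ ∣ x` on the box `[[1, D]]`. Because every
`cᵢ` divides `D`, membership in `B` depends only on `x mod D`. Conditioned on `A`, write `x = c * y`
with `y ∈ [[1, D / c]]`: the event `B(c * y)` only depends on `y mod D / c`, so its density on
`[[1, D / c]]` is the same as on `[[1, D]]`. There it contains `B`. So `A` and `B` are positively
correlated, and so are their complements. This gives
`#(¬A ∩ ¬B) ≥ (1 - 1/‖c‖) · #(¬B)`, and induction on the number of vectors `cᵢ` gives the bound.
-/

open Finset

namespace BoxSieve

variable {d : ℕ}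

lemma card_filter_and_add_card_filter_and_not {α : Type*} (s : Finset α) (p q : α → Prop)
    [DecidablePred p] [DecidablePred q] :
    #{x ∈ s | p x ∧ q x} + #{x ∈ s | p x ∧ ¬ q x} = #{x ∈ s | p x} := by
  rw [← filter_filter, ← filter_filter, card_filter_add_card_filter_not]

lemma card_filter_and_not_add_card_filter_not_and_not {α : Type*} (s : Finset α)
    (p q : α → Prop) [DecidablePred p] [DecidablePred q] :
    #{x ∈ s | p x ∧ ¬ q x} + #{x ∈ s | ¬ p x ∧ ¬ q x} = #{x ∈ s | ¬ q x} := by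
  simpa only [filter_filter, and_comm] using
    card_filter_add_card_filter_not (s := s.filter (¬ q ·)) p

def box (D : Fin d → ℕ) : Finset (Fin d → ℕ) :=
  Fintype.piFinset fun j => Icc 1 (D j)

def IsPeriodicMod (P : Fin d → ℕ) (E : (Fin d → ℕ) → Prop) : Prop :=
  ∀ x y, (∀ j, x j ≡ y j [MOD P j]) → E x → E y

lemma card_box (D : Fin d → ℕ) : #(box D) = ∏ j, D j := by
  simp only [box, Fintype.card_piFinset, Nat.card_Icc, Nat.add_sub_cancel]

lemma mul_mem_Icc_one_iff {c D y : ℕ} (hc : 0 < c) (hcD : c ∣ D) :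
    c * y ∈ Icc 1 D ↔ y ∈ Icc 1 (D / c) := by
  obtain ⟨m, rfl⟩ := hcD
  rw [Nat.mul_div_cancel_left _ hc, mem_Icc, mem_Icc]
  constructor
  · rintro ⟨h1, h2⟩
    exact ⟨Nat.pos_of_mul_pos_left h1, Nat.le_of_mul_le_mul_left h2 hc⟩
  · rintro ⟨h1, h2⟩
    exact ⟨Nat.mul_pos hc h1, Nat.mul_le_mul_left c h2⟩

lemma card_filter_forall_dvd_and (D c : Fin d → ℕ) (hc : ∀ j, 0 < c j) (hcD : ∀ j, c j ∣ D j)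
    (F : (Fin d → ℕ) → Prop) [DecidablePred F] :
    #{x ∈ box D | (∀ j, c j ∣ x j) ∧ F x} = #{y ∈ box (D / c) | F (c * y)} := by
  refine card_nbij' (fun x => x / c) (fun y => c * y) ?_ ?_ ?_ ?_
  · rintro x hx
    simp only [coe_filter, box, Fintype.mem_piFinset, Set.mem_ofPred_eq] at hx ⊢
    obtain ⟨hxD, hcx, hFx⟩ := hx
    have hx_eq : c * (x / c) = x := funext fun j => Nat.mul_div_cancel' (hcx j)
    refine ⟨fun j => ?_, by rwa [hx_eq]⟩
    change x j / c j ∈ Icc 1 (D j / c j)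
    rw [← mul_mem_Icc_one_iff (hc j) (hcD j), Nat.mul_div_cancel' (hcx j)]
    exact hxD j
  · rintro y hy
    simp only [coe_filter, box, Fintype.mem_piFinset, Set.mem_ofPred_eq] at hy ⊢
    exact ⟨fun j => (mul_mem_Icc_one_iff (hc j) (hcD j)).2 (hy.1 j),
      fun j => Dvd.intro _ rfl, hy.2⟩
  · rintro x hx
    simp only [coe_filter, Set.mem_ofPred_eq] at hx
    exact funext fun j => Nat.mul_div_cancel' (hx.2.1 j)
  · rintro y -
    exact funext fun j => Nat.mul_div_cancel_left (y j) (hc j)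

section Periodic

variable {m P x y t : ℕ}

lemma pred_mod_add_one_mem_Icc (hx : x ∈ Icc 1 (m * P)) : (x - 1) % P + 1 ∈ Icc 1 P := by
  rw [mem_Icc] at hx ⊢
  have hP : 0 < P := Nat.pos_of_mul_pos_left (hx.1.trans hx.2)
  exact ⟨Nat.le_add_left 1 _, Nat.mod_lt _ hP⟩

lemma pred_div_mem_range (hx : x ∈ Icc 1 (m * P)) : (x - 1) / P ∈ range m := by
  rw [mem_Icc] at hx
  rw [mem_range, Nat.div_lt_iff_lt_mul (Nat.pos_of_mul_pos_left (hx.1.trans hx.2))]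
  omega

lemma pred_mod_add_one_modEq (hx : 1 ≤ x) : (x - 1) % P + 1 ≡ x [MOD P] := by
  simpa [Nat.sub_add_cancel hx] using (Nat.mod_modEq (x - 1) P).add_right 1

lemma pred_mod_add_one_add_mul_pred_div (hx : 1 ≤ x) :
    (x - 1) % P + 1 + P * ((x - 1) / P) = x := by
  have := Nat.mod_add_div (x - 1) P
  omega

lemma add_mul_mem_Icc (hy : y ∈ Icc 1 P) (ht : t ∈ range m) : y + P * t ∈ Icc 1 (m * P) := by
  rw [mem_Icc] at hy ⊢
  rw [mem_range] at ht
  refine ⟨le_add_right hy.1, ?_⟩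
  calc y + P * t ≤ P * (t + 1) := by linarith
    _ ≤ m * P := by rw [mul_comm]; exact Nat.mul_le_mul_right P ht

lemma add_mul_pred_mod_add_one (hy : y ∈ Icc 1 P) : (y + P * t - 1) % P + 1 = y := by
  rw [mem_Icc] at hy
  rw [Nat.sub_add_comm hy.1, Nat.add_mul_mod_self_left, Nat.mod_eq_of_lt (by omega)]
  omega

lemma add_mul_pred_div (hy : y ∈ Icc 1 P) : (y + P * t - 1) / P = t := by
  rw [mem_Icc] at hy
  rw [Nat.sub_add_comm hy.1, Nat.add_mul_div_left _ _ (by omega), Nat.div_eq_of_lt (by omega),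
    zero_add]

end Periodic

lemma card_filter_box_mul (m P : Fin d → ℕ) (E : (Fin d → ℕ) → Prop) [DecidablePred E]
    (hE : IsPeriodicMod P E) :
    #{x ∈ box (m * P) | E x} = (∏ j, m j) * #{y ∈ box P | E y} := by
  have hm : ∏ j, m j = #(Fintype.piFinset fun j => range (m j)) := by
    simp only [Fintype.card_piFinset, card_range]
  rw [hm, Nat.mul_comm #(Fintype.piFinset _), ← card_product]
  refine card_nbij' (fun x => (fun j => (x j - 1) % P j + 1, fun j => (x j - 1) / P j))
    (fun yt j => yt.1 j + P j * yt.2 j) ?_ ?_ ?_ ?_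
  · rintro x hx
    simp only [coe_filter, box, Fintype.mem_piFinset, Set.mem_ofPred_eq, coe_product,
      Set.mem_prod, mem_coe] at hx ⊢
    refine ⟨⟨fun j => pred_mod_add_one_mem_Icc (hx.1 j), hE _ _ (fun j => ?_) hx.2⟩,
      fun j => pred_div_mem_range (hx.1 j)⟩
    exact (pred_mod_add_one_modEq (mem_Icc.1 (hx.1 j)).1).symm
  · rintro ⟨y, t⟩ hyt
    simp only [coe_filter, box, Fintype.mem_piFinset, Set.mem_ofPred_eq, coe_product,
      Set.mem_prod, mem_coe] at hyt ⊢
    refine ⟨fun j => add_mul_mem_Icc (hyt.1.1 j) (hyt.2 j), hE _ _ (fun j => ?_) hyt.1.2⟩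
    exact (Nat.add_mul_mod_self_left (y j) (P j) (t j)).symm
  · rintro x hx
    simp only [coe_filter, box, Fintype.mem_piFinset, Set.mem_ofPred_eq] at hx
    exact funext fun j => pred_mod_add_one_add_mul_pred_div (mem_Icc.1 (hx.1 j)).1
  · rintro ⟨y, t⟩ hyt
    simp only [coe_product, Set.mem_prod, coe_filter, box, Fintype.mem_piFinset,
      Set.mem_ofPred_eq, mem_coe] at hyt
    ext j
    · exact add_mul_pred_mod_add_one (hyt.1.1 j)
    · exact add_mul_pred_div (hyt.1.1 j)

lemma card_filter_le_prod_mul_card_filter_forall_dvd_and (D c : Fin d → ℕ) (hc : ∀ j, 0 < c j)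
    (hcD : ∀ j, c j ∣ D j) (E : (Fin d → ℕ) → Prop) [DecidablePred E] (hE : IsPeriodicMod D E)
    (hEc : ∀ x, E x → E (c * x)) :
    #{x ∈ box D | E x} ≤ (∏ j, c j) * #{x ∈ box D | (∀ j, c j ∣ x j) ∧ E x} := by
  have hD : c * (D / c) = D := funext fun j => Nat.mul_div_cancel' (hcD j)
  have hE' : IsPeriodicMod (D / c) (fun y => E (c * y)) := fun x y hxy =>
    hE _ _ fun j => by
      have h := (hxy j).mul_left' (c j)
      rwa [Pi.div_apply, Nat.mul_div_cancel' (hcD j)] at h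
  calc #{x ∈ box D | E x} ≤ #{x ∈ box D | E (c * x)} :=
        card_le_card (monotone_filter_right _ fun x _ => hEc x)
    _ = #{x ∈ box (c * (D / c)) | E (c * x)} := by rw [hD]
    _ = (∏ j, c j) * #{y ∈ box (D / c) | E (c * y)} := card_filter_box_mul _ _ _ hE'
    _ = (∏ j, c j) * #{x ∈ box D | (∀ j, c j ∣ x j) ∧ E x} := by
      rw [card_filter_forall_dvd_and D c hc hcD]

lemma card_filter_dvd_mul_prod (D c : Fin d → ℕ) (hc : ∀ j, 0 < c j) (hcD : ∀ j, c j ∣ D j) :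
    #{x ∈ box D | ∀ j, c j ∣ x j} * ∏ j, c j = ∏ j, D j := by
  have h := card_filter_forall_dvd_and D c hc hcD (fun _ => True)
  rw [filter_congr fun x _ => (and_true _).to_iff, filter_true, card_box] at h
  rw [h, ← prod_mul_distrib]
  exact prod_congr rfl fun j _ => Nat.div_mul_cancel (hcD j)

lemma isPeriodicMod_exists_dvd {ι : Type*} (D : Fin d → ℕ) (s : Finset ι) (c : ι → Fin d → ℕ)
    (hcD : ∀ i ∈ s, ∀ j, c i j ∣ D j) :
    IsPeriodicMod D fun x => ∃ i ∈ s, ∀ j, c i j ∣ x j := by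
  rintro x y hxy ⟨i, hi, hix⟩
  exact ⟨i, hi, fun j => ((hxy j).dvd_iff (hcD i hi j)).1 (hix j)⟩

lemma mul_card_filter_not_le_card_filter_not_dvd_and_not (D c : Fin d → ℕ)
    (hc : ∀ j, 0 < c j) (hcD : ∀ j, c j ∣ D j) (B : (Fin d → ℕ) → Prop) [DecidablePred B]
    (hB : IsPeriodicMod D B) (hBc : ∀ x, B x → B (c * x)) :
    (1 - 1 / ∏ j, (c j : ℝ)) * #{x ∈ box D | ¬ B x} ≤
      #{x ∈ box D | ¬ (∀ j, c j ∣ x j) ∧ ¬ B x} := by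
  have hC : (0 : ℝ) < ∏ j, (c j : ℝ) := prod_pos fun j _ => Nat.cast_pos.2 (hc j)
  have hA := card_filter_dvd_mul_prod D c hc hcD
  have hAB := card_filter_le_prod_mul_card_filter_forall_dvd_and D c hc hcD B hB hBc
  have h1 := card_filter_and_add_card_filter_and_not (box D) (fun x => ∀ j, c j ∣ x j) B
  have h2 := card_filter_and_not_add_card_filter_not_and_not (box D) (fun x => ∀ j, c j ∣ x j) B
  have h3 := card_filter_add_card_filter_not (s := box D) B
  rw [card_box] at h3
  rw [one_sub_div hC.ne', div_mul_eq_mul_div, div_le_iff₀ hC]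
  replace hA := congrArg (Nat.cast : ℕ → ℝ) hA
  replace hAB := (Nat.cast_le (α := ℝ)).2 hAB
  replace h1 := congrArg (Nat.cast : ℕ → ℝ) h1
  replace h2 := congrArg (Nat.cast : ℕ → ℝ) h2
  replace h3 := congrArg (Nat.cast : ℕ → ℝ) h3
  push_cast at hA hAB h1 h2 h3
  linear_combination hAB - (∏ j, (c j : ℝ)) * h2 + (∏ j, (c j : ℝ)) * h1 + hA - h3

lemma prod_mul_prod_one_sub_le_card_filter_forall_exists_not_dvd {ι : Type*} (D : Fin d → ℕ)
    (hD : ∀ j, 0 < D j) (c : ι → Fin d → ℕ) (s : Finset ι) (hcD : ∀ i ∈ s, ∀ j, c i j ∣ D j) :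
    (∏ j, (D j : ℝ)) * ∏ i ∈ s, (1 - 1 / ∏ j, (c i j : ℝ)) ≤
      #{x ∈ box D | ∀ i ∈ s, ∃ j, ¬ c i j ∣ x j} := by
  classical
  induction s using Finset.induction_on with
  | empty => simp [card_box]
  | insert a s ha ih =>
    have hcaD := hcD a (mem_insert_self a s)
    have hca : ∀ j, 0 < c a j := fun j => Nat.pos_of_dvd_of_pos (hcaD j) (hD j)
    have hCa : 1 ≤ ∏ j, (c a j : ℝ) := by
      rw [← Nat.cast_prod]
      exact Nat.one_le_cast.2 (prod_pos fun j _ => hca j)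
    have step := mul_card_filter_not_le_card_filter_not_dvd_and_not D (c a) hca hcaD
      (fun x => ∃ i ∈ s, ∀ j, c i j ∣ x j)
      (isPeriodicMod_exists_dvd D s c fun i hi => hcD i (mem_insert_of_mem hi))
      (fun x ⟨i, hi, hix⟩ => ⟨i, hi, fun j => (hix j).mul_left _⟩)
    simp only [not_exists, not_and, not_forall] at step
    rw [prod_insert ha]
    simp only [forall_mem_insert]
    calc (∏ j, (D j : ℝ)) * ((1 - 1 / ∏ j, (c a j : ℝ)) * ∏ i ∈ s, (1 - 1 / ∏ j, (c i j : ℝ)))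
        = (1 - 1 / ∏ j, (c a j : ℝ)) *
            ((∏ j, (D j : ℝ)) * ∏ i ∈ s, (1 - 1 / ∏ j, (c i j : ℝ))) := by ring
      _ ≤ (1 - 1 / ∏ j, (c a j : ℝ)) * #{x ∈ box D | ∀ i ∈ s, ∃ j, ¬ c i j ∣ x j} :=
        mul_le_mul_of_nonneg_left (ih fun i hi => hcD i (mem_insert_of_mem hi))
          (sub_nonneg.2 ((div_le_one (by linarith)).2 hCa))
      _ ≤ _ := step

end BoxSieve

theorem multidimensional_sieve_general (d k : ℕ)
    (c : Fin k → Fin d → ℕ) (D : Fin d → ℕ)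
    (hD : ∀ j, 0 < D j)
    (hdvd : ∀ i j, c i j ∣ D j) :
    ((Fintype.piFinset fun j => Finset.Icc 1 (D j)).filter
        (fun x => ∀ i, ∃ j, ¬ c i j ∣ x j)).card ≥
      (∏ j, (D j : ℝ)) * ∏ i, (1 - 1 / ∏ j, (c i j : ℝ)) := by
  simpa only [BoxSieve.box, mem_univ, true_implies] using
    BoxSieve.prod_mul_prod_one_sub_le_card_filter_forall_exists_not_dvd D hD c univ
      fun i _ => hdvd i

theorem multidimensional_sieve (d k : ℕ) (hd : 0 < d)
    (c : Fin k → Fin d → ℕ) (D : Fin d → ℕ)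
    (hc : ∀ i j, 0 < c i j) (hD : ∀ j, 0 < D j)
    (hprod : ∀ j, D j ∣ ∏ i, c i j)
    (hdvd : ∀ i j, c i j ∣ D j) :
    ((Fintype.piFinset fun j => Finset.Icc 1 (D j)).filter
        (fun x => ∀ i, ∃ j, ¬ c i j ∣ x j)).card ≥
      (∏ j, (D j : ℝ)) * ∏ i, (1 - 1 / ∏ j, (c i j : ℝ)) :=
  multidimensional_sieve_general d k c D hD hdvd
end

section
/- The series ∑_p 1/φ(ℓ(p)), where p ranges over all primes, converges. -/
open Nat Matrix Finset



lemma fib_matrix (p : ℕ) [Fact p.Prime] (n : ℕ) :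
    (!![1,1;1,0] : Matrix (Fin 2) (Fin 2) (ZMod p)) ^ (n+1)
      = (fib (n+1) : ZMod p) • !![1,1;1,0] + (fib n : ZMod p) • 1 := by
  induction n with
  | zero => simp
  | succ n ih =>
    rw [pow_succ, ih, add_mul, smul_mul_assoc, smul_mul_assoc, one_mul]
    have : (!![1,1;1,0] : Matrix (Fin 2) (Fin 2) (ZMod p)) * !![1,1;1,0] = !![1,1;1,0] + 1 := by
      ext i j; fin_cases i <;> fin_cases j <;> simp [Matrix.mul_apply, Fin.sum_univ_two, Matrix.one_apply]
    rw [this, smul_add, fib_add_two]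
    push_cast
    module

lemma key_cong (p : ℕ) (hp : p.Prime) (h2 : p ≠ 2) :
    ((fib p : ZMod p) = (5 : ZMod p) ^ ((p-1)/2)
      ∧ (2 : ZMod p) * fib (p-1) = 1 - (5:ZMod p) ^ ((p-1)/2)) := by
  haveI : Fact p.Prime := ⟨hp⟩
  set M : Matrix (Fin 2) (Fin 2) (ZMod p) := !![1,1;1,0] with hM
  set s : ZMod p := (5 : ZMod p) ^ ((p-1)/2) with hs
  set A : Matrix (Fin 2) (Fin 2) (ZMod p) := (2 : ZMod p) • M - 1 with hA
  have hA2 : A ^ 2 = (5 : ZMod p) • 1 := by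
    ext i j; fin_cases i <;> fin_cases j <;>
      simp [hA, hM, pow_two, Matrix.mul_apply, Fin.sum_univ_two, Matrix.one_apply,
        Matrix.sub_apply, Matrix.smul_apply] <;> ring
  have hoddp : Odd p := hp.odd_of_ne_two h2
  have hpeq : 2 * ((p-1)/2) + 1 = p := by
    have := Nat.odd_iff.mp hoddp; omega
  have hAp : A ^ p = s • A := by
    calc A ^ p = (A ^ 2) ^ ((p-1)/2) * A := by
          rw [← pow_mul, ← pow_succ, hpeq]
      _ = s • A := by
          rw [hA2, smul_pow, one_pow, smul_mul_assoc, one_mul, hs]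
  have hfrob : A ^ p = (2 : ZMod p) • M ^ p - 1 := by
    have hcomm : Commute ((2 : ZMod p) • M) (-1 : Matrix (Fin 2) (Fin 2) (ZMod p)) :=
      Commute.neg_one_right _
    have hbin := add_pow_char_of_commute p hcomm
    have h1 : A = (2 : ZMod p) • M + (-1) := by rw [hA, sub_eq_add_neg]
    rw [h1, hbin, smul_pow, hoddp.neg_one_pow]
    have h2p : ((2 : ZMod p)) ^ p = 2 := ZMod.pow_card _
    rw [h2p, sub_eq_add_neg]
  -- M^p = fib p • M + fib (p-1) • 1
  have hMp : M ^ p = (fib p : ZMod p) • M + (fib (p-1) : ZMod p) • 1 := by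
    have := fib_matrix p (p - 1)
    have hp1 : p - 1 + 1 = p := Nat.succ_pred_eq_of_pos hp.pos
    rw [hp1] at this
    exact this
  have heq : (2 : ZMod p) • ((fib p : ZMod p) • M + (fib (p-1) : ZMod p) • 1) - 1 = s • ((2 : ZMod p) • M - 1) := by
    rw [← hMp, ← hfrob, hAp, hA]
  constructor
  · have := congrArg (fun X => X 0 1) heq
    simp [hM, Matrix.smul_apply, Matrix.sub_apply, Matrix.add_apply, Matrix.one_apply] at this
    -- this : 2 * fib p = s * 2  (hopefully)
    have h2ne : (2 : ZMod p) ≠ 0 := by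
      intro h
      have : ((2:ℕ) : ZMod p) = 0 := by exact_mod_cast h
      have hd := (ZMod.natCast_eq_zero_iff 2 p).mp this
      exact h2 ((Nat.prime_dvd_prime_iff_eq hp Nat.prime_two).mp hd)
    exact mul_left_cancel₀ h2ne (by rw [this]; ring)
  · have := congrArg (fun X => X 1 1) heq
    simp [hM, Matrix.smul_apply, Matrix.sub_apply, Matrix.add_apply, Matrix.one_apply] at this
    linear_combination this


lemma prime_dvd_fib_pred_mul_succ (p : ℕ) (hp : p.Prime) (h2 : p ≠ 2) (h5 : p ≠ 5) :
    p ∣ fib (p-1) * fib (p+1) := by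
  haveI : Fact p.Prime := ⟨hp⟩
  obtain ⟨hfp, hfm⟩ := key_cong p hp h2
  set s : ZMod p := (5 : ZMod p) ^ ((p-1)/2) with hs
  have hne5 : (5 : ZMod p) ≠ 0 := by
    intro h
    have : ((5:ℕ) : ZMod p) = 0 := by exact_mod_cast h
    have hd := (ZMod.natCast_eq_zero_iff 5 p).mp this
    exact h5 ((Nat.prime_dvd_prime_iff_eq hp (by norm_num)).mp hd)
  have hodd := Nat.odd_iff.mp (hp.odd_of_ne_two h2)
  have hs2 : s ^ 2 = 1 := by
    rw [hs, ← pow_mul]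
    have : (p-1)/2 * 2 = p - 1 := by omega
    rw [this]
    exact ZMod.pow_card_sub_one_eq_one hne5
  have hplus : (2 : ZMod p) * fib (p+1) = 1 + s := by
    have : p + 1 = (p - 1) + 2 := by omega
    rw [this, fib_add_two]
    push_cast
    have hp1 : p - 1 + 1 = p := by omega
    rw [mul_add, hfm, hp1, hfp]
    ring
  have hmain : ((fib (p-1) * fib (p+1) : ℕ) : ZMod p) * 4 = 0 := by
    push_cast
    have : ((fib (p-1) : ZMod p)) * (fib (p+1)) * 4
        = ((2 : ZMod p) * fib (p-1)) * ((2:ZMod p) * fib (p+1)) := by ring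
    rw [this, hfm, hplus]
    have : (1 - s) * (1 + s) = 1 - s ^ 2 := by ring
    rw [this, hs2, sub_self]
  have h4 : (4 : ZMod p) ≠ 0 := by
    intro h
    have : ((4:ℕ) : ZMod p) = 0 := by exact_mod_cast h
    have hd := (ZMod.natCast_eq_zero_iff 4 p).mp this
    have hd' : p ∣ 2 * 2 := by simpa using hd
    rcases (Nat.Prime.dvd_mul hp).mp hd' with h' | h' <;>
      exact h2 ((Nat.prime_dvd_prime_iff_eq hp Nat.prime_two).mp h')
  have := mul_eq_zero.mp hmain
  rcases this with h | h
  · exact (ZMod.natCast_eq_zero_iff _ p).mp h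
  · exact absurd h h4


lemma fibZ_exists (p : ℕ) (hp : p.Prime) : ∃ n, 0 < n ∧ p ∣ fib n := by
  by_cases h2 : p = 2
  · exact ⟨3, by norm_num, by rw [h2]; decide⟩
  by_cases h5 : p = 5
  · exact ⟨5, by norm_num, by rw [h5]; decide⟩
  rcases (hp.dvd_mul).mp (prime_dvd_fib_pred_mul_succ p hp h2 h5) with h | h
  · exact ⟨p - 1, by have := hp.two_le; omega, h⟩
  · exact ⟨p + 1, by omega, h⟩

lemma fibZ_spec (p : ℕ) (hp : p.Prime) : 0 < fibZ p ∧ p ∣ fib (fibZ p) :=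
  Nat.sInf_mem (fibZ_exists p hp)

lemma fibZ_dvd (p : ℕ) (hp : p.Prime) {n : ℕ} (hn : 0 < n) (h : p ∣ fib n) : fibZ p ∣ n := by
  obtain ⟨hz, hzd⟩ := fibZ_spec p hp
  have hg : p ∣ fib (Nat.gcd (fibZ p) n) := by
    rw [fib_gcd]; exact Nat.dvd_gcd hzd h
  have hgpos : 0 < Nat.gcd (fibZ p) n := Nat.gcd_pos_of_pos_right _ hn
  have hle : fibZ p ≤ Nat.gcd (fibZ p) n := Nat.sInf_le ⟨hgpos, hg⟩
  have hle2 : Nat.gcd (fibZ p) n ≤ fibZ p := Nat.le_of_dvd hz (Nat.gcd_dvd_left _ _)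
  have : Nat.gcd (fibZ p) n = fibZ p := le_antisymm hle2 hle
  rw [← this]; exact Nat.gcd_dvd_right _ _

lemma fibZ_dvd_pred_or_succ (p : ℕ) (hp : p.Prime) (h5 : p ≠ 5) :
    fibZ p ∣ p - 1 ∨ fibZ p ∣ p + 1 := by
  by_cases h2 : p = 2
  · right
    subst h2
    exact fibZ_dvd 2 Nat.prime_two (by norm_num) (by decide)
  rcases (hp.dvd_mul).mp (prime_dvd_fib_pred_mul_succ p hp h2 h5) with h | h
  · exact Or.inl (fibZ_dvd p hp (by have := hp.two_le; omega) h)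
  · exact Or.inr (fibZ_dvd p hp (by omega) h)

lemma three_le_fibZ (p : ℕ) (hp : p.Prime) : 3 ≤ fibZ p := by
  obtain ⟨hz, hzd⟩ := fibZ_spec p hp
  by_contra h
  interval_cases hzv : fibZ p <;> simp_all [fib_one]
  · exact absurd (Nat.le_of_dvd one_pos (by simpa using hzd)) (by have := hp.two_le; omega)
  · exact absurd (Nat.le_of_dvd one_pos (by simpa [show fib 2 = 1 from rfl] using hzd)) (by have := hp.two_le; omega)

lemma coprime_fibZ (p : ℕ) (hp : p.Prime) (h5 : p ≠ 5) : Nat.Coprime p (fibZ p) := by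
  rw [hp.coprime_iff_not_dvd]
  intro hd
  have h2 := hp.two_le
  rcases fibZ_dvd_pred_or_succ p hp h5 with h | h
  · have := Nat.le_of_dvd (by omega) (hd.trans h)
    omega
  · have := (hd.trans h)
    have : p ∣ 1 := (Nat.dvd_add_right (dvd_refl p)).mp this
    simp at this; omega

lemma totient_ellF (p : ℕ) (hp : p.Prime) (h5 : p ≠ 5) :
    Nat.totient (ellF p) = (p - 1) * Nat.totient (fibZ p) := by
  have hc := coprime_fibZ p hp h5
  rw [ellF, Nat.Coprime.lcm_eq_mul hc, Nat.totient_mul hc, Nat.totient_prime hp]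

lemma fib_lt_two_pow (n : ℕ) : fib n < 2 ^ n := by
  induction n using Nat.strong_induction_on with
  | _ n ih =>
    match n with
    | 0 => decide
    | 1 => decide
    | (m+2) =>
      have h1 := ih m (by omega)
      have h2 := ih (m+1) (by omega)
      rw [fib_add_two]
      calc fib m + fib (m+1) < 2^m + 2^(m+1) := by omega
        _ ≤ 2^(m+2) := by ring_nf; omega


lemma odd_totient_sq (n : ℕ) (hodd : Odd n) : n ≤ Nat.totient n ^ 2 := by
  induction n using Nat.strong_induction_on with
  | _ n ih =>
    have hn0 : n ≠ 0 := by rintro rfl; simp at hodd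
    rcases Nat.lt_or_ge n 2 with h1 | h1
    · interval_cases n <;> simp
    set p := n.minFac with hp
    have hpp : p.Prime := Nat.minFac_prime (by omega)
    have hpodd : p ≠ 2 := by
      intro h
      have : (2:ℕ) ∣ n := h ▸ Nat.minFac_dvd n
      rw [Nat.odd_iff] at hodd; omega
    have hp3 : 3 ≤ p := by have h2 := hpp.two_le; rcases Nat.lt_or_ge p 3 with h|h; · interval_cases p <;> simp_all
                           · exact h
    set k := n.factorization p with hk
    have hk1 : 1 ≤ k := Nat.Prime.factorization_pos_of_dvd hpp hn0 (Nat.minFac_dvd n)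
    set m := n / p ^ k with hm
    have hnd : n = p ^ k * m := (Nat.ordProj_mul_ordCompl_eq_self n p).symm
    have hcop : Nat.Coprime p m := Nat.coprime_ordCompl hpp hn0
    have hcopk : Nat.Coprime (p ^ k) m := Nat.Coprime.pow_left _ hcop
    have hm0 : m ≠ 0 := by rintro h; rw [h, mul_zero] at hnd; exact hn0 hnd
    have hm1 : 1 ≤ m := Nat.one_le_iff_ne_zero.mpr hm0
    have hpk1 : 1 < p ^ k := by
      calc 1 < p := by omega
      _ ≤ p ^ k := Nat.le_self_pow (by omega) p
    have hmlt : m < n := by nlinarith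
    have hmodd : Odd m := by
      rcases Nat.even_or_odd m with ⟨u, hu⟩ | ho
      · exfalso
        have h2 : n = 2 * (p ^ k * u) := by rw [hnd, hu]; ring
        rw [Nat.odd_iff] at hodd; omega
      · exact ho
    have ihm := ih m hmlt hmodd
    have htot : Nat.totient n = p ^ (k-1) * (p-1) * Nat.totient m := by
      rw [hnd, Nat.totient_mul hcopk, Nat.totient_prime_pow hpp (by omega)]
    have hppow : p ^ k ≤ (p ^ (k-1) * (p-1)) ^ 2 := by
      have e1 : (p ^ (k-1) * (p-1))^2 = (p^(k-1))^2 * (p-1)^2 := by ring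
      have e2 : p ^ (k-1) ≤ (p^(k-1))^2 := Nat.le_self_pow (by omega) _
      have e3 : p ≤ (p-1)^2 := by
        rcases p with _ | q
        · omega
        · simp only [Nat.succ_sub_one]
          nlinarith
      have e4 : p ^ k = p ^ (k-1) * p := by
        rw [← pow_succ]; congr 1; omega
      calc p ^ k = p ^ (k-1) * p := e4
        _ ≤ (p^(k-1))^2 * (p-1)^2 := Nat.mul_le_mul e2 e3
        _ = (p ^ (k-1) * (p-1))^2 := e1.symm
    calc n = p ^ k * m := hnd
      _ ≤ (p ^ (k-1) * (p-1)) ^ 2 * (Nat.totient m ^ 2) := Nat.mul_le_mul hppow ihm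
      _ = Nat.totient n ^ 2 := by rw [htot]; ring

lemma two_mul_totient_sq (n : ℕ) : n ≤ 2 * Nat.totient n ^ 2 := by
  rcases Nat.even_or_odd n with he | ho
  · have hn0 : n = 0 ∨ n ≠ 0 := by omega
    rcases hn0 with rfl | hn0
    · simp
    set k := n.factorization 2 with hk
    have hk1 : 1 ≤ k := Nat.Prime.factorization_pos_of_dvd Nat.prime_two hn0 he.two_dvd
    set m := n / 2 ^ k with hm
    have hnd : n = 2 ^ k * m := (Nat.ordProj_mul_ordCompl_eq_self n 2).symm
    have hcop : Nat.Coprime 2 m := Nat.coprime_ordCompl Nat.prime_two hn0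
    have hmodd : Odd m := by
      rcases Nat.even_or_odd m with h | h
      · exfalso; have := Nat.eq_one_of_dvd_coprimes hcop (dvd_refl 2) h.two_dvd; omega
      · exact h
    have ihm := odd_totient_sq m hmodd
    have htot : Nat.totient n = 2 ^ (k-1) * Nat.totient m := by
      rw [hnd, Nat.totient_mul (Nat.Coprime.pow_left _ hcop), Nat.totient_prime_pow Nat.prime_two (by omega)]
      norm_num
    have h2k : 2 ^ k ≤ 2 * (2 ^ (k-1))^2 := by
      have e4 : 2 ^ k = 2 ^ (k-1) * 2 := by rw [← pow_succ]; congr 1; omega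
      have : 2 ^ (k-1) ≤ (2 ^ (k-1))^2 := Nat.le_self_pow (by omega) _
      omega
    calc n = 2 ^ k * m := hnd
      _ ≤ (2 * (2 ^ (k-1))^2) * (Nat.totient m ^ 2) := Nat.mul_le_mul h2k ihm
      _ = 2 * Nat.totient n ^ 2 := by rw [htot]; ring
  · exact le_trans (odd_totient_sq n ho) (by omega)


noncomputable def Hreal (n : ℕ) : ℝ := ∑ i ∈ Finset.range n, ((i:ℝ)+1)⁻¹

lemma Hreal_eq (n : ℕ) : Hreal n = (harmonic n : ℝ) := by
  rw [Hreal, harmonic]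
  push_cast
  norm_num

lemma Hreal_mono : Monotone Hreal := by
  intro a b hab
  exact Finset.sum_le_sum_of_subset_of_nonneg (Finset.range_subset_range.mpr hab)
    (fun i _ _ => by positivity)

lemma Hreal_le (n : ℕ) : Hreal n ≤ 1 + Real.log n := by
  rw [Hreal_eq]; exact_mod_cast harmonic_le_one_add_log n

lemma sum_inv_le_Hreal (K : Finset ℕ) (hK : ∀ k ∈ K, 1 ≤ k) :
    ∑ k ∈ K, ((k:ℝ))⁻¹ ≤ Hreal K.card := by
  induction K using Finset.strongInduction with
  | _ K ih =>
    rcases K.eq_empty_or_nonempty with rfl | hne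
    · simp [Hreal]
    · set M := K.max' hne with hM
      have hMK : M ∈ K := K.max'_mem hne
      have hsub : K ⊆ Finset.Icc 1 M := by
        intro k hk
        exact Finset.mem_Icc.mpr ⟨hK k hk, K.le_max' k hk⟩
      have hcard : K.card ≤ M := by
        have := Finset.card_le_card hsub
        simpa using this
      have hK' : ∀ k ∈ K.erase M, 1 ≤ k := fun k hk => hK k (Finset.mem_of_mem_erase hk)
      have ihe := ih (K.erase M) (Finset.erase_ssubset hMK) hK'
      have hcarde : (K.erase M).card = K.card - 1 := Finset.card_erase_of_mem hMK
      have hpos : 1 ≤ K.card := Finset.card_pos.mpr hne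
      calc ∑ k ∈ K, ((k:ℝ))⁻¹ = (M:ℝ)⁻¹ + ∑ k ∈ K.erase M, ((k:ℝ))⁻¹ :=
            (Finset.add_sum_erase K _ hMK).symm
        _ ≤ (K.card:ℝ)⁻¹ + Hreal (K.card - 1) := by
            apply add_le_add _ (hcarde ▸ ihe)
            apply inv_anti₀
            · exact_mod_cast hpos
            · exact_mod_cast hcard
        _ = Hreal K.card := by
            have h1 : K.card = (K.card - 1) + 1 := by omega
            have h2 : Hreal ((K.card - 1) + 1) = Hreal (K.card - 1) + (((K.card - 1 : ℕ):ℝ)+1)⁻¹ := by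
              rw [Hreal, Finset.sum_range_succ, ← Hreal]
            have h3 : ((K.card:ℝ)) = ((K.card - 1 : ℕ) : ℝ) + 1 := by
              conv_lhs => rw [h1]
              push_cast; ring
            conv_rhs => rw [h1]
            rw [h2, h3]
            ring


noncomputable def kf (n : ℕ) (p : Nat.Primes) : ℕ :=
  if n ∣ (p:ℕ) - 1 then ((p:ℕ)-1)/n else ((p:ℕ)+1)/n

lemma kf_spec (n : ℕ) (hn3 : 3 ≤ n) (p : Nat.Primes) (hz : fibZ (p:ℕ) = n) (h5 : (p:ℕ) ≠ 5) :
    1 ≤ kf n p ∧ ((p:ℕ) = kf n p * n + 1 ∨ (p:ℕ) + 1 = kf n p * n) := by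
  have hp2 := p.2.two_le
  have hd := fibZ_dvd_pred_or_succ (p:ℕ) p.2 h5
  rw [hz] at hd
  rw [kf]
  by_cases h : n ∣ (p:ℕ) - 1
  · rw [if_pos h]
    obtain ⟨k, hk⟩ := h
    have hk2 : (p:ℕ) - 1 = k * n := by rw [hk, Nat.mul_comm]
    have hk' : ((p:ℕ) - 1)/n = k := by rw [hk]; exact Nat.mul_div_cancel_left k (by omega)
    rw [hk']
    constructor
    · rcases Nat.eq_zero_or_pos k with rfl | hpos
      · simp at hk2; omega
      · exact hpos
    · left; omega
  · rw [if_neg h]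
    have hd2 : n ∣ (p:ℕ) + 1 := by tauto
    obtain ⟨k, hk⟩ := hd2
    have hk2 : (p:ℕ) + 1 = k * n := by rw [hk, Nat.mul_comm]
    have hk' : ((p:ℕ) + 1)/n = k := by rw [hk]; exact Nat.mul_div_cancel_left k (by omega)
    rw [hk']
    constructor
    · rcases Nat.eq_zero_or_pos k with rfl | hpos
      · simp at hk2
      · exact hpos
    · right; omega

lemma card_bound (n : ℕ) (hn3 : 3 ≤ n) (B : Finset Nat.Primes)
    (hz : ∀ p ∈ B, fibZ (p:ℕ) = n) : B.card < n := by
  have hprod : (∏ p ∈ B, (p:ℕ)) ∣ fib n := by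
    have himg : ∏ a ∈ B.image (fun p : Nat.Primes => (p:ℕ)), a = ∏ p ∈ B, (p:ℕ) :=
      Finset.prod_image (fun x _ y _ h => Subtype.val_injective h)
    rw [← himg]
    apply Finset.prod_primes_dvd
    · intro a ha
      obtain ⟨p, hp, rfl⟩ := Finset.mem_image.mp ha
      exact p.2.prime
    · intro a ha
      obtain ⟨p, hp, rfl⟩ := Finset.mem_image.mp ha
      have := (fibZ_spec (p:ℕ) p.2).2
      rwa [hz p hp] at this
  have h2 : 2 ^ B.card ≤ ∏ p ∈ B, (p:ℕ) :=
    Finset.pow_card_le_prod _ _ _ (fun p _ => p.2.two_le)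
  have h3 : (∏ p ∈ B, (p:ℕ)) ≤ fib n :=
    Nat.le_of_dvd (Nat.fib_pos.mpr (by omega)) hprod
  have h4 : 2 ^ B.card < 2 ^ n := lt_of_le_of_lt (le_trans h2 h3) (fib_lt_two_pow n)
  exact (Nat.pow_lt_pow_iff_right (by norm_num)).mp h4

lemma inner_bound (n : ℕ) (hn3 : 3 ≤ n) (B : Finset Nat.Primes)
    (hz : ∀ p ∈ B, fibZ (p:ℕ) = n) (h5 : ∀ p ∈ B, (p:ℕ) ≠ 5) :
    ∑ p ∈ B, (1:ℝ) / (Nat.totient (ellF (p:ℕ)) : ℝ)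
      ≤ 9 * (1 + Real.log n) / ((n:ℝ) * Real.sqrt n) := by
  classical
  have hn0 : (0:ℝ) < n := by positivity
  have hlog : (0:ℝ) ≤ 1 + Real.log n := by
    have : (0:ℝ) ≤ Real.log n := Real.log_nonneg (by exact_mod_cast by omega)
    linarith
  -- step A: rewrite f p
  have hstepA : ∀ p ∈ B, (1:ℝ) / (Nat.totient (ellF (p:ℕ)) : ℝ)
      = (((p:ℕ) - 1 : ℕ):ℝ)⁻¹ * ((Nat.totient n : ℕ):ℝ)⁻¹ := by
    intro p hp
    rw [totient_ellF (p:ℕ) p.2 (h5 p hp), hz p hp]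
    push_cast
    rw [one_div, mul_inv]
  rw [Finset.sum_congr rfl hstepA, ← Finset.sum_mul]
  -- step B: bound ∑ (p-1)⁻¹
  have hkey : ∀ p ∈ B, (((p:ℕ) - 1 : ℕ):ℝ)⁻¹ ≤ 3 * (n:ℝ)⁻¹ * ((kf n p : ℝ))⁻¹ := by
    intro p hp
    obtain ⟨hk1, hcase⟩ := kf_spec n hn3 p (hz p hp) (h5 p hp)
    have hp2 := p.2.two_le
    have hnat : kf n p * n ≤ 3 * ((p:ℕ) - 1) := by
      have hge : n ≤ kf n p * n := Nat.le_mul_of_pos_left n hk1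
      rcases hcase with h | h <;> omega
    have hpos1 : (0:ℝ) < ((p:ℕ) - 1 : ℕ) := by
      have : 1 ≤ (p:ℕ) - 1 := by omega
      exact_mod_cast by omega
    have hpos2 : (0:ℝ) < (kf n p : ℝ) * n := by
      have : (1:ℝ) ≤ (kf n p : ℝ) := by exact_mod_cast hk1
      positivity
    rw [inv_le_iff_one_le_mul₀ hpos1]
    have h3 : (kf n p : ℝ) * n ≤ 3 * ((((p:ℕ) - 1 : ℕ)):ℝ) := by exact_mod_cast hnat
    have hk0 : (0:ℝ) < (kf n p : ℝ) := by exact_mod_cast hk1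
    rw [mul_comm]
    calc (1:ℝ) = ((kf n p:ℝ) * n) * (((kf n p:ℝ)) * n)⁻¹ := by field_simp
      _ ≤ (3 * (((p:ℕ) - 1 : ℕ):ℝ)) * (((kf n p:ℝ)) * n)⁻¹ := by
          apply mul_le_mul_of_nonneg_right h3 (by positivity)
      _ = (((p:ℕ) - 1 : ℕ):ℝ) * (3 * (n:ℝ)⁻¹ * ((kf n p : ℝ))⁻¹) := by
          field_simp
  have hsumB : ∑ p ∈ B, (((p:ℕ) - 1 : ℕ):ℝ)⁻¹
      ≤ 3 * (n:ℝ)⁻¹ * ∑ p ∈ B, ((kf n p : ℝ))⁻¹ := by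
    rw [Finset.mul_sum]
    exact Finset.sum_le_sum hkey
  -- step C: group by kf
  have hgroup : ∑ p ∈ B, ((kf n p : ℝ))⁻¹ ≤ 2 * ∑ j ∈ B.image (kf n), ((j:ℝ))⁻¹ := by
    rw [← Finset.sum_fiberwise_of_maps_to (g := kf n) (fun p hp => Finset.mem_image_of_mem _ hp),
      Finset.mul_sum]
    apply Finset.sum_le_sum
    intro j hj
    obtain ⟨q, hq, rfl⟩ := Finset.mem_image.mp hj
    have hfib : ∀ p ∈ B.filter (fun p => kf n p = kf n q), (p:ℕ) = kf n q * n + 1 ∨ (p:ℕ) + 1 = kf n q * n := by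
      intro p hp
      obtain ⟨hpB, hpk⟩ := Finset.mem_filter.mp hp
      have := (kf_spec n hn3 p (hz p hpB) (h5 p hpB)).2
      rwa [hpk] at this
    have hcard2 : (B.filter (fun p => kf n p = kf n q)).card ≤ 2 := by
      have hsub : ∀ p ∈ B.filter (fun p => kf n p = kf n q),
          (p:ℕ) ∈ ({kf n q * n + 1, kf n q * n - 1} : Finset ℕ) := by
        intro p hp
        rcases hfib p hp with h | h
        · exact Finset.mem_insert.mpr (Or.inl h)
        · refine Finset.mem_insert.mpr (Or.inr ?_)
          simp only [Finset.mem_singleton]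
          omega
      calc (B.filter (fun p => kf n p = kf n q)).card
          ≤ ({kf n q * n + 1, kf n q * n - 1} : Finset ℕ).card :=
            Finset.card_le_card_of_injOn (fun p => (p:ℕ)) hsub
              (fun x _ y _ h => Subtype.val_injective h)
        _ ≤ 2 := Finset.card_insert_le _ _ |>.trans (by simp)
    calc ∑ p ∈ B.filter (fun p => kf n p = kf n q), ((kf n p : ℝ))⁻¹
        = ∑ p ∈ B.filter (fun p => kf n p = kf n q), ((kf n q : ℝ))⁻¹ := by
          apply Finset.sum_congr rfl
          intro p hp
          rw [(Finset.mem_filter.mp hp).2]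
      _ = (B.filter (fun p => kf n p = kf n q)).card * ((kf n q : ℝ))⁻¹ := by
          rw [Finset.sum_const, nsmul_eq_mul]
      _ ≤ 2 * ((kf n q : ℝ))⁻¹ := by
          apply mul_le_mul_of_nonneg_right _ (by positivity)
          exact_mod_cast hcard2
  -- step D: harmonic bound
  have h1le : ∀ j ∈ B.image (kf n), 1 ≤ j := by
    intro j hj
    obtain ⟨q, hq, rfl⟩ := Finset.mem_image.mp hj
    exact (kf_spec n hn3 q (hz q hq) (h5 q hq)).1
  have hD : ∑ j ∈ B.image (kf n), ((j:ℝ))⁻¹ ≤ 1 + Real.log n := by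
    calc ∑ j ∈ B.image (kf n), ((j:ℝ))⁻¹ ≤ Hreal (B.image (kf n)).card :=
          sum_inv_le_Hreal _ h1le
      _ ≤ Hreal n := Hreal_mono (le_trans (Finset.card_image_le) (le_of_lt (card_bound n hn3 B hz)))
      _ ≤ 1 + Real.log n := Hreal_le n
  -- step E: totient sqrt
  have htotn : Real.sqrt n ≤ Real.sqrt 2 * (Nat.totient n : ℝ) := by
    have h := two_mul_totient_sq n
    have : (n:ℝ) ≤ 2 * (Nat.totient n : ℝ)^2 := by exact_mod_cast h
    calc Real.sqrt n ≤ Real.sqrt (2 * (Nat.totient n : ℝ)^2) := Real.sqrt_le_sqrt this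
      _ = Real.sqrt 2 * (Nat.totient n : ℝ) := by
        rw [Real.sqrt_mul (by norm_num), Real.sqrt_sq (by positivity)]
  have htotpos : (0:ℝ) < (Nat.totient n : ℝ) := by
    have := Nat.totient_pos.mpr (show 0 < n by omega)
    exact_mod_cast this
  -- combine
  have hfinal : (∑ p ∈ B, (((p:ℕ) - 1 : ℕ):ℝ)⁻¹) ≤ 6 * (1 + Real.log n) * (n:ℝ)⁻¹ := by
    calc (∑ p ∈ B, (((p:ℕ) - 1 : ℕ):ℝ)⁻¹)
        ≤ 3 * (n:ℝ)⁻¹ * ∑ p ∈ B, ((kf n p : ℝ))⁻¹ := hsumB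
      _ ≤ 3 * (n:ℝ)⁻¹ * (2 * ∑ j ∈ B.image (kf n), ((j:ℝ))⁻¹) := by
          apply mul_le_mul_of_nonneg_left hgroup (by positivity)
      _ ≤ 3 * (n:ℝ)⁻¹ * (2 * (1 + Real.log n)) := by
          apply mul_le_mul_of_nonneg_left _ (by positivity)
          linarith [hD]
      _ = 6 * (1 + Real.log n) * (n:ℝ)⁻¹ := by ring
  have hsqrtpos : (0:ℝ) < Real.sqrt n := Real.sqrt_pos.mpr hn0
  calc (∑ p ∈ B, (((p:ℕ) - 1 : ℕ):ℝ)⁻¹) * ((Nat.totient n : ℕ):ℝ)⁻¹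
      ≤ (6 * (1 + Real.log n) * (n:ℝ)⁻¹) * ((Nat.totient n : ℕ):ℝ)⁻¹ := by
        apply mul_le_mul_of_nonneg_right hfinal (by positivity)
    _ ≤ (6 * (1 + Real.log n) * (n:ℝ)⁻¹) * (Real.sqrt 2 / Real.sqrt n) := by
        apply mul_le_mul_of_nonneg_left _ (by positivity)
        rw [inv_le_iff_one_le_mul₀ htotpos, div_mul_eq_mul_div, le_div_iff₀ hsqrtpos, one_mul]
        linarith [htotn]
    _ ≤ 9 * (1 + Real.log n) / ((n:ℝ) * Real.sqrt n) := by
        have h2 : Real.sqrt 2 ≤ 3/2 := by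
          nlinarith [Real.sq_sqrt (by norm_num : (0:ℝ) ≤ 2), Real.sqrt_nonneg 2]
        have hX : (0:ℝ) ≤ (1 + Real.log n) * ((n:ℝ)⁻¹ * (Real.sqrt n)⁻¹) := by positivity
        have e1 : 6 * (1 + Real.log n) * (n:ℝ)⁻¹ * (Real.sqrt 2 / Real.sqrt n)
            = (6 * Real.sqrt 2) * ((1 + Real.log n) * ((n:ℝ)⁻¹ * (Real.sqrt n)⁻¹)) := by
          rw [div_eq_mul_inv]; ring
        have e2 : 9 * (1 + Real.log n) / ((n:ℝ) * Real.sqrt n)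
            = 9 * ((1 + Real.log n) * ((n:ℝ)⁻¹ * (Real.sqrt n)⁻¹)) := by
          rw [div_eq_mul_inv, mul_inv]; ring
        rw [e1, e2]
        exact mul_le_mul_of_nonneg_right (by nlinarith [h2]) hX


noncomputable def gmaj (n : ℕ) : ℝ := 9 * (1 + Real.log n) / ((n:ℝ) * Real.sqrt n)

lemma log_nonneg' (n : ℕ) : 0 ≤ Real.log n := by
  rcases Nat.eq_zero_or_pos n with rfl | h
  · simp
  · exact Real.log_nonneg (by exact_mod_cast h)

lemma gmaj_nonneg (n : ℕ) : 0 ≤ gmaj n := by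
  apply div_nonneg
  · nlinarith [log_nonneg' n]
  · positivity

lemma summable_gmaj : Summable gmaj := by
  have hsum : Summable (fun n : ℕ => 81 * ((n:ℝ) ^ ((11:ℝ)/8))⁻¹) := by
    apply Summable.mul_left
    have := Real.summable_one_div_nat_rpow (p := (11:ℝ)/8) |>.mpr (by norm_num)
    simpa [one_div] using this
  apply Summable.of_nonneg_of_le gmaj_nonneg _ hsum
  · intro n
    rcases Nat.eq_zero_or_pos n with rfl | hn
    · simp [gmaj]
    have hn0 : (0:ℝ) < n := by exact_mod_cast hn
    have hn1 : (1:ℝ) ≤ n := by exact_mod_cast hn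
    have hlog : Real.log n ≤ 8 * (n:ℝ) ^ ((1:ℝ)/8) := by
      have := Real.log_le_rpow_div (le_of_lt hn0) (by norm_num : (0:ℝ) < 1/8)
      calc Real.log n ≤ (n:ℝ) ^ ((1:ℝ)/8) / (1/8) := this
        _ = 8 * (n:ℝ) ^ ((1:ℝ)/8) := by ring
    have hone : (1:ℝ) ≤ (n:ℝ) ^ ((1:ℝ)/8) :=
      Real.one_le_rpow hn1 (by norm_num)
    have hnum : 9 * (1 + Real.log n) ≤ 81 * (n:ℝ) ^ ((1:ℝ)/8) := by nlinarith
    have hden : (n:ℝ) * Real.sqrt n = (n:ℝ) ^ ((3:ℝ)/2) := by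
      rw [Real.sqrt_eq_rpow]
      calc (n:ℝ) * (n:ℝ) ^ ((1:ℝ)/2) = (n:ℝ) ^ ((1:ℝ)) * (n:ℝ) ^ ((1:ℝ)/2) := by
            rw [Real.rpow_one]
        _ = (n:ℝ) ^ ((3:ℝ)/2) := by rw [← Real.rpow_add hn0]; norm_num
    have hdpos : (0:ℝ) < (n:ℝ) ^ ((3:ℝ)/2) := Real.rpow_pos_of_pos hn0 _
    rw [gmaj, hden]
    calc 9 * (1 + Real.log n) / (n:ℝ) ^ ((3:ℝ)/2)
        ≤ (81 * (n:ℝ) ^ ((1:ℝ)/8)) / (n:ℝ) ^ ((3:ℝ)/2) := by gcongr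
      _ = 81 * ((n:ℝ) ^ ((11:ℝ)/8))⁻¹ := by
          rw [mul_div_assoc]
          congr 1
          rw [div_eq_iff (ne_of_gt hdpos), ← Real.rpow_neg (le_of_lt hn0), ← Real.rpow_add hn0]
          norm_num

theorem summable_one_div_totient_ell :
    Summable (fun p : Nat.Primes => (1 : ℝ) / (Nat.totient (ellF p) : ℝ)) := by
  classical
  set f : Nat.Primes → ℝ := fun p => (1 : ℝ) / (Nat.totient (ellF p) : ℝ) with hf
  set zf : Nat.Primes → ℕ := fun p => fibZ p.1 with hzf
  have hnn : ∀ p : Nat.Primes, 0 ≤ f p := fun p => by positivity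
  apply summable_of_sum_le (c := 1 + ∑' n, gmaj n) hnn
  intro u
  have key : ∀ v : Finset Nat.Primes, (⟨5, by norm_num⟩ : Nat.Primes) ∉ v →
      ∑ p ∈ v, f p ≤ ∑' n, gmaj n := by
    intro v hv
    have hmaps : ∀ p ∈ v, zf p ∈ v.image zf := fun p hp => Finset.mem_image_of_mem _ hp
    rw [← Finset.sum_fiberwise_of_maps_to hmaps]
    have hstep : ∀ n ∈ v.image zf,
        ∑ p ∈ v.filter (fun p => zf p = n), f p ≤ gmaj n := by
      intro n hn
      obtain ⟨q, hq, rfl⟩ := Finset.mem_image.mp hn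
      apply inner_bound _ (three_le_fibZ _ q.2)
      · intro p hp; exact (Finset.mem_filter.mp hp).2
      · intro p hp
        intro h5
        apply hv
        have hpv : p = (⟨5, by norm_num⟩ : Nat.Primes) := Subtype.ext h5
        rw [← hpv]
        exact (Finset.mem_filter.mp hp).1
    calc ∑ n ∈ v.image zf, ∑ p ∈ v.filter (fun p => zf p = n), f p
        ≤ ∑ n ∈ v.image zf, gmaj n := Finset.sum_le_sum hstep
      _ ≤ ∑' n, gmaj n := Summable.sum_le_tsum _ (fun n _ => gmaj_nonneg n) summable_gmaj
  by_cases h5 : (⟨5, by norm_num⟩ : Nat.Primes) ∈ u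
  · have herase := key (u.erase _) (Finset.notMem_erase _ u)
    have hle1 : f ⟨5, by norm_num⟩ ≤ 1 := by
      rw [hf]
      have hz5 := (fibZ_spec 5 (by norm_num)).1
      have htp : 0 < Nat.totient (ellF 5) := by
        apply Nat.totient_pos.mpr
        have : Nat.lcm 5 (fibZ 5) ≠ 0 := Nat.lcm_ne_zero (by norm_num) (by omega)
        rw [ellF]; omega
      have h1 : (1:ℝ) ≤ (Nat.totient (ellF 5) : ℝ) := by exact_mod_cast htp
      simp only
      rw [div_le_one (by linarith)]
      exact h1
    calc ∑ p ∈ u, f p = f ⟨5, by norm_num⟩ + ∑ p ∈ u.erase _, f p :=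
          (Finset.add_sum_erase u f h5).symm
      _ ≤ 1 + ∑' n, gmaj n := add_le_add hle1 herase
  · have := key u h5
    have htsumnn : (0:ℝ) ≤ ∑' n, gmaj n := tsum_nonneg gmaj_nonneg
    linarith
end

section
/- Let k be a positive integer divisible by 10, and let p be a prime such that gcd(p − 1, F_{p−1}) = k. Then gcd(p(p−1), F_{p(p−1)}) = kp. -/
/-!
Since `5 ∣ p - 1`, `x² = x + 1` has the root `-(ζ + ζ⁴)` in `𝔽_p` for a primitive fifth root of
unity `ζ`, and Binet's formula in `𝔽_p` gives `p ∣ F_{p-1}`; with `k ∣ F_{p-1} ∣ F_{p(p-1)}` this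
gives `k p ∣ gcd (p (p-1)) F_{p(p-1)}`.

Conversely, every `0 < m < p` divides `F_N` for some `N` prime to `p`: the matrix `[[1,1],[1,0]]`
has order dividing `|GL₂(𝔽_q)| = (q²-1)(q²-q)`, so `q ∣ F_{(q²-1)(q²-q)}`, and `q ^ j ∣ F_n`
lifts to `q ^ (j+1) ∣ F_{qn}`. All prime factors of such `N` are at most `q + 1 ≤ p`, with equality
only for `p = 3`. Hence `m ∣ F_{pn}` forces `m ∣ F_{gcd N (pn)} ∣ F_n`, so
`gcd (p-1) F_{p(p-1)} = gcd (p-1) F_{p-1} = k`, and the gcd in question divides `p k`.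
-/

open Finset Matrix

theorem Commute.add_pow_succ_of_mul_self_eq_zero {R : Type*} [Semiring R] {a b : R}
    (hab : Commute a b) (hb : b * b = 0) (n : ℕ) :
    (a + b) ^ (n + 1) = a ^ (n + 1) + (n + 1 : ℕ) * (a ^ n * b) := by
  induction n with
  | zero => simp
  | succ n ih =>
    have hba : a ^ n * b * a = a ^ (n + 1) * b := by
      rw [mul_assoc, ← hab.eq, ← mul_assoc, ← pow_succ]
    have hbb : a ^ n * b * b = 0 := by rw [mul_assoc, hb, mul_zero]
    rw [pow_succ, ih, add_mul, mul_add, mul_add, mul_assoc _ _ a, hba, mul_assoc _ _ b, hbb,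
      mul_zero, add_zero, ← pow_succ]
    push_cast
    simp only [add_mul, one_mul]
    abel

namespace Nat

theorem pow_succ_eq_fib_add_fib_mul {R : Type*} [Semiring R] {x : R} (hx : x ^ 2 = x + 1)
    (n : ℕ) : x ^ (n + 1) = fib n + fib (n + 1) * x := by
  induction n with
  | zero => simp
  | succ n ih =>
    rw [pow_succ, ih, add_mul, mul_assoc, ← sq, hx, fib_add_two]
    push_cast
    simp only [mul_add, add_mul, mul_one]
    abel

def fibMatrix (R : Type*) [Semiring R] : Matrix (Fin 2) (Fin 2) R := !![1, 1; 1, 0]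

section fibMatrix

variable {R : Type*} [Semiring R]

theorem fibMatrix_sq : fibMatrix R ^ 2 = fibMatrix R + 1 := by
  ext i j
  fin_cases i <;> fin_cases j <;> simp [fibMatrix, sq]

theorem fibMatrix_pow_apply_zero_one (n : ℕ) : (fibMatrix R ^ n) 0 1 = fib n := by
  cases n with
  | zero => simp
  | succ n =>
    rw [pow_succ_eq_fib_add_fib_mul fibMatrix_sq]
    simp [fibMatrix, Matrix.mul_apply, Matrix.natCast_apply]

end fibMatrix

/- Over `ZMod N`, `M ^ n = F_{n-1} + F_n M` with square-zero second term, so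
`(M ^ n) ^ q = F_{n-1} ^ q + q F_n F_{n-1} ^ (q-1) M = F_{n-1} ^ q` is a scalar matrix. -/
theorem dvd_fib_mul_of_dvd_fib_sq {N q n : ℕ} (hsq : N ∣ fib n ^ 2) (hq : N ∣ q * fib n) :
    N ∣ fib (q * n) := by
  obtain _ | q := q
  · simp
  obtain _ | m := n
  · simp
  have cast_eq_zero (k : ℕ) : (k : Matrix (Fin 2) (Fin 2) (ZMod N)) = 0 ↔ N ∣ k :=
    CharP.cast_eq_zero_iff _ N k
  set M := fibMatrix (ZMod N)
  set b := (fib (m + 1) : Matrix (Fin 2) (Fin 2) (ZMod N)) * M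
  have hbb : b * b = 0 := by
    rw [mul_assoc, ← mul_assoc M, ← (Nat.cast_commute _ M).eq, ← mul_assoc, ← mul_assoc,
      ← Nat.cast_mul, ← sq, (cast_eq_zero _).2 hsq, zero_mul, zero_mul]
  have hqb : ((q + 1 : ℕ) : Matrix (Fin 2) (Fin 2) (ZMod N)) * b = 0 := by
    rw [← mul_assoc, ← Nat.cast_mul, (cast_eq_zero _).2 hq, zero_mul]
  have hpow : M ^ ((q + 1) * (m + 1)) = (fib m ^ (q + 1) : ℕ) := by
    rw [pow_mul', pow_succ_eq_fib_add_fib_mul fibMatrix_sq,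
      (Nat.cast_commute _ _).add_pow_succ_of_mul_self_eq_zero hbb,
      (Nat.cast_commute (q + 1) _).left_comm, hqb, mul_zero, add_zero, Nat.cast_pow]
  have := congrArg (· 0 1) hpow
  simpa [M, fibMatrix_pow_apply_zero_one, Matrix.natCast_apply, ZMod.natCast_eq_zero_iff]
    using this

theorem pow_succ_dvd_fib_mul {q j n : ℕ} (hj : j ≠ 0) (h : q ^ j ∣ fib n) :
    q ^ (j + 1) ∣ fib (q * n) :=
  dvd_fib_mul_of_dvd_fib_sq
    ((pow_dvd_pow q (by omega)).trans (pow_mul q j 2 ▸ pow_dvd_pow_of_dvd h 2))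
    (by rw [pow_succ']; exact mul_dvd_mul_left q h)

theorem dvd_fib_card_GL (n : ℕ) : n ∣ fib (Nat.card (GL (Fin 2) (ZMod n))) := by
  have hunit : IsUnit (fibMatrix (ZMod n)) := by
    rw [isUnit_iff_isUnit_det]
    simp [fibMatrix, det_fin_two]
  have hpow := congrArg Units.val (pow_card_eq_one' (x := hunit.unit))
  rw [Units.val_pow_eq_pow_val, IsUnit.unit_spec, Units.val_one] at hpow
  have := congrArg (· 0 1) hpow
  simpa [fibMatrix_pow_apply_zero_one, ZMod.natCast_eq_zero_iff] using this

theorem Prime.pow_succ_dvd_fib {q : ℕ} (hq : q.Prime) (a : ℕ) :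
    q ^ (a + 1) ∣ fib (q ^ a * ((q ^ 2 - 1) * (q ^ 2 - q))) := by
  induction a with
  | zero =>
    have := Fact.mk hq
    have h := dvd_fib_card_GL q
    rw [Matrix.card_GL_field, Fin.prod_univ_two, ZMod.card] at h
    simpa using h
  | succ a ih =>
    have h := pow_succ_dvd_fib_mul (by omega) ih
    rwa [← mul_assoc, ← _root_.pow_succ'] at h

theorem dvd_fib_mul_prod_primeFactors (m : ℕ) :
    m ∣ fib (m * ∏ q ∈ m.primeFactors, (q ^ 2 - 1) * (q ^ 2 - q)) := by
  rcases eq_or_ne m 0 with rfl | hm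
  · simp
  refine (Nat.dvd_iff_prime_pow_dvd_dvd _ _).2 fun q c hq hqc => ?_
  obtain _ | a := c
  · simp
  have hqm : q ∈ m.primeFactors :=
    Nat.mem_primeFactors.2 ⟨hq, (dvd_pow_self q (succ_ne_zero a)).trans hqc, hm⟩
  refine (hq.pow_succ_dvd_fib a).trans (fib_dvd _ _ (mul_dvd_mul ?_ (dvd_prod_of_mem _ hqm)))
  exact (pow_dvd_pow q a.le_succ).trans hqc

theorem sq_sub_one_mul_sq_sub_self (q : ℕ) :
    (q ^ 2 - 1) * (q ^ 2 - q) = (q - 1) ^ 2 * q * (q + 1) := by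
  obtain _ | q := q
  · simp
  · have h1 : (q + 1) ^ 2 - 1 = q * (q + 2) := Nat.sub_eq_of_eq_add (by ring)
    have h2 : (q + 1) ^ 2 - (q + 1) = (q + 1) * q := Nat.sub_eq_of_eq_add (by ring)
    rw [h1, h2, add_tsub_cancel_right]
    ring

theorem Prime.not_dvd_mul_prod_primeFactors {p m : ℕ} (hp : p.Prime) (hp3 : p ≠ 3)
    (hm0 : m ≠ 0) (hm : m < p) : ¬ p ∣ m * ∏ q ∈ m.primeFactors, (q ^ 2 - 1) * (q ^ 2 - q) := by
  rw [hp.dvd_mul, not_or, hp.prime.dvd_finsetProd_iff]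
  refine ⟨Nat.not_dvd_of_pos_of_lt (by omega) hm, ?_⟩
  rintro ⟨q, hqm, hpq⟩
  obtain ⟨hq, hqm, -⟩ := Nat.mem_primeFactors.1 hqm
  have hq2 := hq.two_le
  have hqp : q < p := (Nat.le_of_dvd (by omega) hqm).trans_lt hm
  rw [sq_sub_one_mul_sq_sub_self, hp.dvd_mul, hp.dvd_mul] at hpq
  rcases hpq with (hpq | hpq) | hpq
  · exact Nat.not_dvd_of_pos_of_lt (by omega) (by omega) (hp.dvd_of_dvd_pow hpq)
  · exact Nat.not_dvd_of_pos_of_lt (by omega) hqp hpq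
  · have : q + 1 = p := le_antisymm hqp (Nat.le_of_dvd (by omega) hpq)
    rcases hq.eq_two_or_odd with rfl | hqo <;> rcases hp.eq_two_or_odd with hp2 | hpo <;> omega

theorem dvd_fib_of_dvd_fib_prime_mul {p m n : ℕ} (hp : p.Prime) (hp3 : p ≠ 3) (hm : m < p)
    (h : m ∣ fib (p * n)) : m ∣ fib n := by
  rcases eq_or_ne m 0 with rfl | hm0
  · simp_all [hp.ne_zero]
  set N := m * ∏ q ∈ m.primeFactors, (q ^ 2 - 1) * (q ^ 2 - q)
  have hN : m ∣ fib (gcd N (p * n)) := by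
    rw [fib_gcd]
    exact dvd_gcd (dvd_fib_mul_prod_primeFactors m) h
  have hNp : Coprime N p :=
    (hp.coprime_iff_not_dvd.2 (hp.not_dvd_mul_prod_primeFactors hp3 hm0 hm)).symm
  have hcop : Coprime (gcd N (p * n)) p := hNp.coprime_dvd_left (gcd_dvd_left _ _)
  exact hN.trans (fib_dvd _ _ (hcop.dvd_of_dvd_mul_left (gcd_dvd_right _ _)))

theorem gcd_fib_prime_mul {p n : ℕ} (hp : p.Prime) (hp3 : p ≠ 3) (hn : n < p) :
    gcd n (fib (p * n)) = gcd n (fib n) := by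
  rcases eq_or_ne n 0 with rfl | hn0
  · simp
  apply dvd_antisymm
  · refine dvd_gcd (gcd_dvd_left _ _) (dvd_fib_of_dvd_fib_prime_mul hp hp3 ?_ (gcd_dvd_right _ _))
    exact (gcd_le_left _ (by omega)).trans_lt hn
  · exact gcd_dvd_gcd_of_dvd_right _ (fib_dvd _ _ (dvd_mul_left n p))

end Nat

namespace ZMod

theorem exists_sq_eq_add_one_of_five_dvd {p : ℕ} [Fact p.Prime] (h5 : 5 ∣ p - 1) :
    ∃ x : ZMod p, x ^ 2 = x + 1 := by
  have := Fact.mk Nat.prime_five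
  -- `-(ζ + ζ⁴) = -2 cos (2π/5)` is the golden ratio
  obtain ⟨g, hg⟩ := exists_prime_orderOf_dvd_card (G := (ZMod p)ˣ) 5 (by rwa [card_units])
  have hζ : IsPrimitiveRoot (g : ZMod p) 5 :=
    IsPrimitiveRoot.coe_units_iff.2 (hg ▸ IsPrimitiveRoot.orderOf g)
  have hsum := hζ.geom_sum_eq_zero (by norm_num)
  simp only [sum_range_succ, sum_range_zero] at hsum
  exact ⟨-(g + g ^ 4), by linear_combination (2 + (g : ZMod p) ^ 3) * hζ.pow_eq_one + hsum⟩

theorem prime_dvd_fib_pred_of_sq_eq_add_one {p : ℕ} [Fact p.Prime] (hp5 : p ≠ 5) {x : ZMod p}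
    (hx : x ^ 2 = x + 1) : p ∣ Nat.fib (p - 1) := by
  have hy : (1 - x) ^ 2 = (1 - x) + 1 := by linear_combination hx
  have hxy : x * (1 - x) = -1 := by linear_combination -hx
  have hx0 : x ≠ 0 := by rintro rfl; simp at hxy
  have hy0 : 1 - x ≠ 0 := by intro h; simp [h] at hxy
  have h5 : (x - (1 - x)) ^ 2 = 5 := by linear_combination 4 * hx
  have h50 : (5 : ZMod p) ≠ 0 := by
    rw [show (5 : ZMod p) = (5 : ℕ) by norm_cast, Ne, natCast_eq_zero_iff,
      Nat.prime_dvd_prime_iff_eq Fact.out Nat.prime_five]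
    exact hp5
  obtain ⟨n, hn⟩ : ∃ n, p - 1 = n + 1 :=
    ⟨p - 2, by have := (Fact.out : p.Prime).two_le; omega⟩
  have hx1 : x ^ (n + 1) = 1 := hn ▸ pow_card_sub_one_eq_one hx0
  have hy1 : (1 - x) ^ (n + 1) = 1 := hn ▸ pow_card_sub_one_eq_one hy0
  have : (Nat.fib (n + 1) : ZMod p) * (x - (1 - x)) = 0 := by
    linear_combination Nat.pow_succ_eq_fib_add_fib_mul hy n - Nat.pow_succ_eq_fib_add_fib_mul hx n
      + hx1 - hy1
  rw [hn, ← natCast_eq_zero_iff]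
  exact (mul_eq_zero.1 this).resolve_right fun h => h50 (by rw [← h5, h]; ring)

end ZMod

theorem gcd_fib_lift_general (k p : ℕ) (h10 : 10 ∣ k) (hp : p.Prime)
    (h : Nat.gcd (p - 1) (Nat.fib (p - 1)) = k) :
    Nat.gcd (p * (p - 1)) (Nat.fib (p * (p - 1))) = k * p := by
  have := Fact.mk hp
  have hk : k ∣ p - 1 := h ▸ Nat.gcd_dvd_left _ _
  have h10p : 10 ∣ p - 1 := h10.trans hk
  have hp2 := hp.two_le
  have hp1 : p - 1 < p := by omega
  have hp3 : p ≠ 3 := by rintro rfl; norm_num at h10p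
  have hp5 : p ≠ 5 := by rintro rfl; norm_num at h10p
  obtain ⟨x, hx⟩ := ZMod.exists_sq_eq_add_one_of_five_dvd ((by norm_num : 5 ∣ 10).trans h10p)
  have hkp : Nat.Coprime k p := (hp.coprime_iff_not_dvd.2 fun hpk => by
    have := Nat.le_of_dvd (by omega) (hpk.trans hk); omega).symm
  have hkF : k * p ∣ Nat.fib (p - 1) :=
    hkp.mul_dvd_of_dvd_of_dvd (h ▸ Nat.gcd_dvd_right _ _)
      (ZMod.prime_dvd_fib_pred_of_sq_eq_add_one hp5 hx)
  apply Nat.dvd_antisymm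
  · calc Nat.gcd (p * (p - 1)) (Nat.fib (p * (p - 1)))
        ∣ Nat.gcd (p * (p - 1)) (p * Nat.fib (p * (p - 1))) :=
          Nat.gcd_dvd_gcd_of_dvd_right _ (dvd_mul_left _ _)
      _ = k * p := by rw [Nat.gcd_mul_left, Nat.gcd_fib_prime_mul hp hp3 hp1, h, mul_comm]
  · exact Nat.dvd_gcd (mul_comm k p ▸ mul_dvd_mul_left p hk)
      (hkF.trans (Nat.fib_dvd _ _ (dvd_mul_left _ _)))

theorem gcd_fib_lift (k p : ℕ) (hk : 0 < k) (h10 : 10 ∣ k) (hp : p.Prime)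
    (h : Nat.gcd (p - 1) (Nat.fib (p - 1)) = k) :
    Nat.gcd (p * (p - 1)) (Nat.fib (p * (p - 1))) = k * p :=
  gcd_fib_lift_general k p h10 hp h
end
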